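/- arXiv:math/0512060 — 4 statements merged into one kernel-verified Lean document; each statement's English description precedes it below -/
import Mathlib

section
/- (The Hamburger Theorem) Let H be a hamburger graph with parameter k, let c^+ and c^- be respectively the number of positive and negative cycle systems of H, and let M_H be its hamburger matrix. Then det M_H = c^+ - c^-. -/
/-- `p` is (the list of vertices of) a directed path with no repeated vertices
from `a` to `b` in the digraph on `V` with edge relation `R`. -/
def IsDirPath {V : Type} (R : V → V → Prop) (a b : V) (p : List V) : Prop :=
  p.Chain' R ∧ p.head? = some a ∧ p.getLast? = some b ∧ p.Nodup

/-- The number of directed paths from `a` to `b` in the digraph with edge relation `R`. -/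
noncomputable def numPaths {V : Type} (R : V → V → Prop) (a b : V) : ℕ :=
  Nat.card {p : List V // IsDirPath R a b p}

/-- `p` is the list of vertices of a directed cycle: the vertices are pairwise distinct,
consecutive vertices are joined by edges, and there is an edge from the last vertex
back to the first one. -/
def IsCycleList {V : Type} (R : V → V → Prop) : List V → Prop
  | [] => False
  | a :: l => (a :: l).Nodup ∧ List.Chain R a (l ++ [a])

/-- A hamburger graph with parameter `k`: two finite acyclic digraphs `G1 = (V1, E1)`
and `G2 = (V2, E2)` on disjoint vertex sets, with distinguished vertices
`v 0, …, v (k-1)` in `G1` (corresponding to `v_1, …, v_k`) and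
`w 0, …, w (k-1)` in `G2` (corresponding to `w_{k+1}, …, w_{2k}`), such that `G1` has a
directed path from `v i` to `v j` only if `i < j` (or `i = j`), `G2` has a directed path
from `w i` to `w j` only if `i > j` (or `i = j`); the connecting edges are added
in the definition of the total edge relation `Hamburger.E` below. -/
structure Hamburger (k : ℕ) where
  V1 : Type
  V2 : Type
  [fin1 : Fintype V1]
  [fin2 : Fintype V2]
  [dec1 : DecidableEq V1]
  [dec2 : DecidableEq V2]
  E1 : V1 → V1 → Prop
  E2 : V2 → V2 → Prop
  v : Fin k → V1
  w : Fin k → V2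
  v_inj : Function.Injective v
  w_inj : Function.Injective w
  acyclic1 : ∀ p : List V1, ¬ IsCycleList E1 p
  acyclic2 : ∀ p : List V2, ¬ IsCycleList E2 p
  path1 : ∀ i j : Fin k, i ≠ j → (∃ p, IsDirPath E1 (v i) (v j) p) → i < j
  path2 : ∀ i j : Fin k, i ≠ j → (∃ p, IsDirPath E2 (w i) (w j) p) → j < i

attribute [instance] Hamburger.fin1 Hamburger.fin2 Hamburger.dec1 Hamburger.dec2

/-- The edge relation of the hamburger graph `H` on the disjoint union of the two
vertex sets: the edges of `G1`, the edges of `G2`, and the connecting edge set `E3`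
consisting of the edges `e i : v i → w i` and `e' i : w i → v i` for each `i`. -/
def Hamburger.E {k : ℕ} (H : Hamburger k) : H.V1 ⊕ H.V2 → H.V1 ⊕ H.V2 → Prop
  | .inl a, .inl b => H.E1 a b
  | .inr a, .inr b => H.E2 a b
  | .inl a, .inr b => ∃ i, a = H.v i ∧ b = H.w i
  | .inr a, .inl b => ∃ i, a = H.w i ∧ b = H.v i

/-- A cycle system of the hamburger graph `H`: a collection of pairwise vertex-disjoint
directed cycles, encoded by the set `S` of visited vertices together with the
permutation of `S` sending each visited vertex to the next vertex of its cycle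
(the successor being joined to it by an edge of `H`). -/
structure CycleSystem {k : ℕ} (H : Hamburger k) where
  S : Finset (H.V1 ⊕ H.V2)
  f : {x // x ∈ S} ≃ {x // x ∈ S}
  hrel : ∀ x : {x // x ∈ S}, H.E x.1 (f x).1

/-- `C.l` : the number of edges of the cycle system `C` going from `G2` to `G1`. -/
noncomputable def CycleSystem.l {k : ℕ} {H : Hamburger k} (C : CycleSystem H) : ℕ :=
  (Finset.univ.filter fun x : {x // x ∈ C.S} =>
    (x.1.isRight && (C.f x).1.isLeft) = true).card

/-- `C.m` : the number of cycles of the cycle system `C`. -/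
noncomputable def CycleSystem.m {k : ℕ} {H : Hamburger k} (C : CycleSystem H) : ℕ :=
  (Equiv.Perm.cycleType C.f).card

/-- The sign `(-1) ^ (l + m)` of a cycle system. -/
noncomputable def CycleSystem.sign {k : ℕ} {H : Hamburger k} (C : CycleSystem H) : ℤ :=
  (-1) ^ (C.l + C.m)

/-- The hamburger matrix of `H`: the `2k × 2k` block matrix `[[A, I], [-I, B]]` where
`A i j` is the number of directed paths from `v i` to `v j` in `G1` and `B i j` is the
number of directed paths from `w i` to `w j` in `G2`. -/
noncomputable def hamMatrix {k : ℕ} (H : Hamburger k) :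
    Matrix (Fin k ⊕ Fin k) (Fin k ⊕ Fin k) ℤ :=
  Matrix.fromBlocks
    (Matrix.of fun i j => (numPaths H.E1 (H.v i) (H.v j) : ℤ)) 1 (-1)
    (Matrix.of fun i j => (numPaths H.E2 (H.w i) (H.w j) : ℤ))


namespace Ham

variable {V : Type} {R : V → V → Prop} {a b c : V} {p : List V}

theorem dirPath_cons (h : IsDirPath R a b p) : ∃ t, p = a :: t := by
  obtain ⟨h1, h2, h3, h4⟩ := h
  cases p with
  | nil => simp at h2
  | cons x t => exact ⟨t, by simp at h2; rw [h2]⟩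

theorem isDirPath_singleton : IsDirPath R a a [a] := by
  refine ⟨List.isChain_singleton a, rfl, rfl, by simp⟩

theorem isDirPath_self (h : IsDirPath R a a p) : p = [a] := by
  obtain ⟨t, rfl⟩ := dirPath_cons h
  obtain ⟨h1, h2, h3, h4⟩ := h
  cases t with
  | nil => rfl
  | cons y t' =>
    exfalso
    rw [List.getLast?_cons_cons] at h3
    obtain ⟨hne, heq⟩ := List.mem_getLast?_eq_getLast h3
    have hmem : a ∈ y :: t' := heq ▸ List.getLast_mem hne
    exact (List.nodup_cons.mp h4).1 hmem

/-- From an edge `a → c` and a path `c ⟶ a` we get a directed cycle. -/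
theorem cycle_of_path (hac : R a c) (hp : IsDirPath R c a p) :
    IsCycleList R (a :: p.dropLast) := by
  obtain ⟨t, rfl⟩ := dirPath_cons hp
  obtain ⟨h1, h2, h3, h4⟩ := hp
  have hsplit : (c :: t).dropLast ++ [a] = c :: t :=
    List.dropLast_append_getLast? a h3
  constructor
  · -- Nodup
    have h4' : ((c :: t).dropLast ++ [a]).Nodup := by rw [hsplit]; exact h4
    rw [List.nodup_append] at h4'
    refine List.nodup_cons.mpr ⟨?_, h4'.1⟩
    intro ha
    exact h4'.2.2 _ ha _ (List.mem_singleton_self a) rfl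
  · -- Chain
    rw [hsplit]
    exact List.chain_cons.mpr ⟨hac, h1⟩

theorem no_path_back (hcyc : ∀ q : List V, ¬ IsCycleList R q) (hac : R a c) :
    ¬ ∃ p, IsDirPath R c a p := by
  rintro ⟨p, hp⟩
  exact hcyc _ (cycle_of_path hac hp)

theorem irrefl_of_acyclic (hcyc : ∀ q : List V, ¬ IsCycleList R q) : ¬ R a a := by
  intro h
  exact hcyc [a] ⟨by simp, List.chain_cons.mpr ⟨h, by simp⟩⟩

/-- a cannot lie on a path `c ⟶ b` if `R a c` and `R` is acyclic -/
theorem not_mem_path (hcyc : ∀ q : List V, ¬ IsCycleList R q) (hac : R a c)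
    (hp : IsDirPath R c b p) : a ∉ p := by
  intro hmem
  obtain ⟨q₁, q₂, rfl⟩ := List.append_of_mem hmem
  obtain ⟨h1, h2, h3, h4⟩ := hp
  -- the prefix q₁ ++ [a] is a path from c to a
  have hpre : IsDirPath R c a (q₁ ++ [a]) := by
    refine ⟨h1.prefix ⟨q₂, by simp⟩, ?_, List.getLast?_concat, ?_⟩
    · cases q₁ with
      | nil => simpa using h2
      | cons x t => simpa using h2
    · have := h4.sublist (l₁ := q₁ ++ [a]) (by simpa using List.sublist_append_left _ _)
      exact this
  exact no_path_back hcyc hac ⟨_, hpre⟩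

open scoped Classical

noncomputable instance pathFintype [Fintype V] (R : V → V → Prop) (a b : V) :
    Fintype {p : List V // IsDirPath R a b p} :=
  Fintype.ofInjective (fun p => (⟨p.1, p.2.2.2.2⟩ : {l : List V // l.Nodup}))
    (fun p q h => Subtype.ext (by simpa using congrArg Subtype.val h))

theorem numPaths_self : numPaths R a a = 1 := by
  have : Unique {p : List V // IsDirPath R a a p} :=
    ⟨⟨⟨[a], isDirPath_singleton⟩⟩, fun p => Subtype.ext (isDirPath_self p.2)⟩
  exact Nat.card_unique

theorem numPaths_eq_zero (h : ¬ ∃ p, IsDirPath R a b p) : numPaths R a b = 0 := by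
  have : IsEmpty {p : List V // IsDirPath R a b p} := ⟨fun p => h ⟨p.1, p.2⟩⟩
  exact Nat.card_of_isEmpty

theorem numPaths_recurrence [Fintype V] (hcyc : ∀ q : List V, ¬ IsCycleList R q) (a b : V) :
    numPaths R a b
      = (if a = b then 1 else 0) + ∑ c : V, (if R a c then numPaths R c b else 0) := by
  by_cases hab : a = b
  · subst hab
    rw [numPaths_self, if_pos rfl]
    have : ∀ c : V, (if R a c then numPaths R c a else 0) = 0 := by
      intro c
      split_ifs with h
      · exact numPaths_eq_zero (no_path_back hcyc h)
      · rfl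
    simp [this]
  · rw [if_neg hab, zero_add]
    -- bijection
    let T := Σ c : {c : V // R a c}, {q : List V // IsDirPath R c.1 b q}
    have key : numPaths R a b = Nat.card T := by
      apply Nat.card_congr
      apply Equiv.symm
      refine Equiv.ofBijective (fun x => ⟨a :: x.2.1, ?_, rfl, ?_, ?_⟩) ⟨?_, ?_⟩
      · -- Chain'
        obtain ⟨t, ht⟩ := dirPath_cons x.2.2
        rw [ht]
        exact List.isChain_cons_cons.mpr ⟨x.1.2, ht ▸ x.2.2.1⟩
      · -- getLast?
        obtain ⟨t, ht⟩ := dirPath_cons x.2.2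
        rw [ht, List.getLast?_cons_cons, ← ht]
        exact x.2.2.2.2.1
      · -- Nodup
        refine List.nodup_cons.mpr ⟨not_mem_path hcyc x.1.2 x.2.2, x.2.2.2.2.2⟩
      · -- injective
        rintro ⟨⟨c, hc⟩, ⟨q, hq⟩⟩ ⟨⟨c', hc'⟩, ⟨q', hq'⟩⟩ h
        have hval : a :: q = a :: q' := congrArg Subtype.val h
        have hqq : q = q' := by simpa using hval
        subst hqq
        have : c = c' := by
          have h1 := hq.2.1
          have h2 := hq'.2.1
          rw [h1] at h2
          exact Option.some.inj h2
        subst this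
        rfl
      · -- surjective
        rintro ⟨p, hp⟩
        obtain ⟨t, rfl⟩ := dirPath_cons hp
        obtain ⟨h1, h2, h3, h4⟩ := hp
        cases t with
        | nil => exact absurd (by simpa using h3) hab
        | cons x t' =>
          rw [List.getLast?_cons_cons] at h3
          refine ⟨⟨⟨x, (List.isChain_cons_cons.mp h1).1⟩,
            ⟨x :: t', (List.isChain_cons_cons.mp h1).2, rfl, h3, (List.nodup_cons.mp h4).2⟩⟩, rfl⟩
    rw [key]
    rw [Nat.card_eq_fintype_card, Fintype.card_sigma]
    have : ∀ c : {c : V // R a c},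
        Fintype.card {q : List V // IsDirPath R c.1 b q} = numPaths R c.1 b := by
      intro c
      rw [numPaths, Nat.card_eq_fintype_card]
    rw [Finset.sum_congr rfl (fun c _ => this c)]
    rw [← Finset.sum_filter]
    exact Finset.sum_subtype (p := fun c => R a c)
      (Finset.univ.filter (fun c => R a c)) (by simp) (fun c => numPaths R c b) |>.symm



theorem irrefl_of_acyclic' {V : Type} {R : V → V → Prop} {a : V}
    (hcyc : ∀ q : List V, ¬ IsCycleList R q) : ¬ R a a := by
  intro h
  exact hcyc [a] ⟨by simp, List.chain_cons.mpr ⟨h, by simp⟩⟩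

theorem cycle_of_perm {X : Type} [Fintype X] {R : X → X → Prop}
    (σ : Equiv.Perm X) (x : X) (hx : σ x ≠ x)
    (hedge : ∀ y, σ y ≠ y → R y (σ y)) : ∃ q : List X, IsCycleList R q := by
  classical
  set g : ℕ → X := fun i => σ^[i] x with hg
  have hper : x ∈ Function.periodicPts σ :=
    Function.mk_mem_periodicPts (orderOf_pos σ) (by
      show σ^[orderOf σ] x = x
      simp [Equiv.Perm.iterate_eq_pow, pow_orderOf_eq_one])
  set n := Function.minimalPeriod σ x with hn
  have hnpos : 0 < n := Function.minimalPeriod_pos_of_mem_periodicPts hper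
  have hgn : g n = x := Function.iterate_minimalPeriod
  have hmove : ∀ m, σ (g m) ≠ g m := by
    intro m h
    have h2 : ∀ j, σ^[j] (g m) = g m := fun j => Function.iterate_fixed h j
    have hj : (n * (m + 1) - m) + m = n * (m + 1) := by
      have : m ≤ n * (m + 1) := by nlinarith
      omega
    have hxx : (⇑σ)^[n * (m+1)] x = x :=
      (Function.isPeriodicPt_minimalPeriod σ x).mul_const (m+1)
    have h3 : (⇑σ)^[n*(m+1)-m] ((⇑σ)^[m] x) = g m := h2 _
    rw [← Function.iterate_add_apply, hj, hxx] at h3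
    apply hx
    calc σ x = σ (g m) := by rw [← h3]
      _ = g m := h
      _ = x := h3.symm
  have hchain : List.Chain' R ((List.range (n+1)).map g) := by
    rw [show List.Chain' R ((List.range (n+1)).map g) = List.IsChain R ((List.range (n+1)).map g) from rfl,
      List.isChain_map, List.isChain_range_succ]
    intro m _
    have hsucc : g (m+1) = σ (g m) := Function.iterate_succ_apply' σ m x
    rw [hsucc]
    exact hedge _ (hmove m)
  have hnodup : ((List.range n).map g).Nodup := by
    refine List.Nodup.map_on ?_ List.nodup_range
    intro i hi j hj hij
    exact Function.iterate_injOn_Iio_minimalPeriod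
      (by simpa using List.mem_range.mp hi) (by simpa using List.mem_range.mp hj) hij
  obtain ⟨m, hm⟩ : ∃ m, n = m + 1 := ⟨n - 1, by omega⟩
  rw [hm] at hchain hnodup hgn
  clear hn
  have hxl : (List.range (m+1)).map g = x :: ((List.range m).map fun i => g (i+1)) := by
    rw [List.range_succ_eq_map, List.map_cons, List.map_map]
    rfl
  have hfull : (List.range (m+1+1)).map g
      = x :: (((List.range m).map fun i => g (i+1)) ++ [x]) := by
    rw [List.range_succ, List.map_append, hxl, List.map_singleton, hgn, List.cons_append]
  refine ⟨x :: ((List.range m).map fun i => g (i+1)), ?_, ?_⟩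
  · rw [← hxl]; exact hnodup
  · have := hfull ▸ hchain
    exact this



open Matrix Equiv Finset

theorem det_one_sub_apply {X : Type} [Fintype X] [DecidableEq X]
    (w : X → X → ℤ) (hw : ∀ x, w x x = 0) :
    (1 - Matrix.of w).det
      = ∑ σ : Equiv.Perm X,
          (Equiv.Perm.sign σ : ℤ) * ∏ x ∈ σ.support, (-(w x (σ x))) := by
  rw [← Matrix.det_transpose, Matrix.det_apply']
  refine Finset.sum_congr rfl fun σ _ => ?_
  congr 1
  have hentry : ∀ i j : X, (1 - Matrix.of w) i j = (if i = j then 1 else 0) - w i j := by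
    intro i j
    simp [Matrix.sub_apply, Matrix.one_apply]
  calc (∏ i : X, (1 - Matrix.of w)ᵀ (σ i) i)
      = ∏ i : X, ((if i = σ i then 1 else 0) - w i (σ i)) := by
        refine Finset.prod_congr rfl fun i _ => ?_
        rw [Matrix.transpose_apply, hentry]
    _ = ∏ i ∈ σ.support, (-(w i (σ i))) := by
        rw [← Finset.prod_subset (Finset.subset_univ σ.support)
          (fun i _ hi => ?_)]
        · refine Finset.prod_congr rfl fun i hi => ?_
          rw [if_neg (Ne.symm (Equiv.Perm.mem_support.mp hi)), zero_sub]
        · have : σ i = i := Equiv.Perm.notMem_support.mp hi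
          rw [this, if_pos rfl, hw, sub_zero]

theorem det_one_sub_adj {X : Type} [Fintype X] [DecidableEq X]
    {R : X → X → Prop} [∀ a b, Decidable (R a b)]
    (hcyc : ∀ q : List X, ¬ IsCycleList R q) :
    (1 - Matrix.of (fun a b => if R a b then (1:ℤ) else 0)).det = 1 := by
  rw [det_one_sub_apply _ (fun x => by rw [if_neg (irrefl_of_acyclic' hcyc)])]
  rw [Finset.sum_eq_single 1]
  · simp
  · intro σ _ hσ
    by_cases hedge : ∀ y, σ y ≠ y → R y (σ y)
    · exfalso
      obtain ⟨x, hx⟩ : ∃ x, σ x ≠ x := by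
        by_contra hall
        push_neg at hall
        exact hσ (Equiv.ext hall)
      exact (fun ⟨q, hq⟩ => hcyc q hq) (cycle_of_perm σ x hx hedge)
    · push_neg at hedge
      obtain ⟨x, hx1, hx2⟩ := hedge
      apply mul_eq_zero_of_right
      refine Finset.prod_eq_zero (Equiv.Perm.mem_support.mpr hx1) ?_
      simp [hx2]
  · simp


open scoped Classical

theorem one_sub_adj_mul_numPaths {V : Type} [Fintype V] [DecidableEq V] {R : V → V → Prop}
    [∀ a b, Decidable (R a b)] (hcyc : ∀ q : List V, ¬ IsCycleList R q) :
    (1 - Matrix.of fun a b => if R a b then (1:ℤ) else 0) *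
      (Matrix.of fun a b => (numPaths R a b : ℤ)) = 1 := by
  ext a b
  have hrec : (numPaths R a b : ℤ)
      = (if a = b then 1 else 0) + ∑ c : V, (if R a c then (numPaths R c b : ℤ) else 0) := by
    have h := congrArg (fun n : ℕ => (n : ℤ)) (numPaths_recurrence hcyc a b)
    push_cast at h
    simpa using h
  rw [Matrix.mul_apply]
  simp only [Matrix.sub_apply, Matrix.one_apply, Matrix.of_apply, sub_mul, one_mul, ite_mul,
    zero_mul]
  rw [Finset.sum_sub_distrib, Finset.sum_ite_eq Finset.univ a
    (fun c => (numPaths R c b : ℤ)), if_pos (Finset.mem_univ a)]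
  rw [hrec]
  ring

variable {k : ℕ} (H : Hamburger k)

noncomputable def W1 : Matrix H.V1 H.V1 ℤ := Matrix.of fun a b => if H.E1 a b then 1 else 0
noncomputable def W2 : Matrix H.V2 H.V2 ℤ := Matrix.of fun a b => if H.E2 a b then 1 else 0
noncomputable def CM : Matrix H.V1 H.V2 ℤ :=
  Matrix.of fun a b => if ∃ i, a = H.v i ∧ b = H.w i then 1 else 0
noncomputable def DM : Matrix H.V2 H.V1 ℤ :=
  Matrix.of fun b a => if ∃ i, b = H.w i ∧ a = H.v i then 1 else 0
noncomputable def UM : Matrix H.V1 (Fin k) ℤ := Matrix.of fun a i => if a = H.v i then 1 else 0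
noncomputable def UwM : Matrix H.V2 (Fin k) ℤ := Matrix.of fun b i => if b = H.w i then 1 else 0
noncomputable def N1 : Matrix H.V1 H.V1 ℤ := Matrix.of fun a b => (numPaths H.E1 a b : ℤ)
noncomputable def N2 : Matrix H.V2 H.V2 ℤ := Matrix.of fun a b => (numPaths H.E2 a b : ℤ)
noncomputable def Amat : Matrix (Fin k) (Fin k) ℤ :=
  Matrix.of fun i j => (numPaths H.E1 (H.v i) (H.v j) : ℤ)
noncomputable def Bmat : Matrix (Fin k) (Fin k) ℤ :=
  Matrix.of fun i j => (numPaths H.E2 (H.w i) (H.w j) : ℤ)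

theorem mul_N1 : (1 - W1 H) * N1 H = 1 := one_sub_adj_mul_numPaths H.acyclic1
theorem mul_N2 : (1 - W2 H) * N2 H = 1 := one_sub_adj_mul_numPaths H.acyclic2

theorem det_one_sub_W1 : (1 - W1 H).det = 1 := det_one_sub_adj H.acyclic1
theorem det_one_sub_W2 : (1 - W2 H).det = 1 := det_one_sub_adj H.acyclic2

noncomputable instance : Invertible (1 - W1 H) :=
  (1 - W1 H).invertibleOfIsUnitDet (by rw [det_one_sub_W1]; exact isUnit_one)
noncomputable instance : Invertible (1 - W2 H) :=
  (1 - W2 H).invertibleOfIsUnitDet (by rw [det_one_sub_W2]; exact isUnit_one)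

theorem invOf_one_sub_W1 : ⅟(1 - W1 H) = N1 H := invOf_eq_right_inv (mul_N1 H)
theorem invOf_one_sub_W2 : ⅟(1 - W2 H) = N2 H := invOf_eq_right_inv (mul_N2 H)

theorem CM_eq : CM H = UM H * (UwM H)ᵀ := by
  ext a b
  rw [Matrix.mul_apply]
  simp only [CM, UM, UwM, Matrix.of_apply, Matrix.transpose_apply]
  by_cases h : ∃ i, a = H.v i ∧ b = H.w i
  · obtain ⟨i₀, h1, h2⟩ := h
    rw [if_pos ⟨i₀, h1, h2⟩, Finset.sum_eq_single i₀]
    · rw [if_pos h1, if_pos h2]; ring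
    · intro j _ hj
      rcases eq_or_ne a (H.v j) with h3 | h3
      · exact absurd (H.v_inj (h1.symm.trans h3)).symm hj
      · rw [if_neg h3, zero_mul]
    · intro h'; exact absurd (Finset.mem_univ i₀) h'
  · rw [if_neg h]
    refine (Finset.sum_eq_zero fun i _ => ?_).symm
    rcases eq_or_ne a (H.v i) with h3 | h3
    · rcases eq_or_ne b (H.w i) with h4 | h4
      · exact absurd ⟨i, h3, h4⟩ h
      · rw [if_neg h4, mul_zero]
    · rw [if_neg h3, zero_mul]

theorem DM_eq : DM H = UwM H * (UM H)ᵀ := by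
  ext b a
  rw [Matrix.mul_apply]
  simp only [DM, UM, UwM, Matrix.of_apply, Matrix.transpose_apply]
  by_cases h : ∃ i, b = H.w i ∧ a = H.v i
  · obtain ⟨i₀, h1, h2⟩ := h
    rw [if_pos ⟨i₀, h1, h2⟩, Finset.sum_eq_single i₀]
    · rw [if_pos h1, if_pos h2]; ring
    · intro j _ hj
      rcases eq_or_ne b (H.w j) with h3 | h3
      · exact absurd (H.w_inj (h1.symm.trans h3)).symm hj
      · rw [if_neg h3, zero_mul]
    · intro h'; exact absurd (Finset.mem_univ i₀) h'
  · rw [if_neg h]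
    refine (Finset.sum_eq_zero fun i _ => ?_).symm
    rcases eq_or_ne b (H.w i) with h3 | h3
    · rcases eq_or_ne a (H.v i) with h4 | h4
      · exact absurd ⟨i, h3, h4⟩ h
      · rw [if_neg h4, mul_zero]
    · rw [if_neg h3, zero_mul]

theorem UtN1U : (UM H)ᵀ * N1 H * UM H = Amat H := by
  ext i j
  rw [Matrix.mul_apply]
  have : ∀ b, ((UM H)ᵀ * N1 H) i b = N1 H (H.v i) b := by
    intro b
    rw [Matrix.mul_apply]
    simp only [UM, Matrix.transpose_apply, Matrix.of_apply, ite_mul, one_mul, zero_mul]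
    rw [Finset.sum_ite_eq' Finset.univ (H.v i) (fun a => N1 H a b)] -- guess form
    · simp
  simp only [this]
  simp only [N1, UM, Matrix.of_apply, mul_ite, mul_one, mul_zero]
  rw [Finset.sum_ite_eq' Finset.univ (H.v j) (fun b => (numPaths H.E1 (H.v i) b : ℤ))]
  simp [Amat]

theorem UwtN2Uw : (UwM H)ᵀ * N2 H * UwM H = Bmat H := by
  ext i j
  rw [Matrix.mul_apply]
  have : ∀ b, ((UwM H)ᵀ * N2 H) i b = N2 H (H.w i) b := by
    intro b
    rw [Matrix.mul_apply]
    simp only [UwM, Matrix.transpose_apply, Matrix.of_apply, ite_mul, one_mul, zero_mul]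
    rw [Finset.sum_ite_eq' Finset.univ (H.w i) (fun a => N2 H a b)]
    · simp
  simp only [this]
  simp only [N2, UwM, Matrix.of_apply, mul_ite, mul_one, mul_zero]
  rw [Finset.sum_ite_eq' Finset.univ (H.w j) (fun b => (numPaths H.E2 (H.w i) b : ℤ))]
  simp [Bmat]

theorem Bmat_triangular : (Bmat H).BlockTriangular OrderDual.toDual := by
  intro i j hij
  have hij' : i < j := hij
  simp only [Bmat, Matrix.of_apply]
  rw [numPaths_eq_zero, Nat.cast_zero]
  intro hex
  exact absurd (H.path2 i j hij'.ne hex) (lt_asymm hij')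

theorem det_Bmat : (Bmat H).det = 1 := by
  rw [Matrix.det_of_lowerTriangular _ (Bmat_triangular H)]
  refine Finset.prod_eq_one fun i _ => ?_
  simp [Bmat, numPaths_self]

noncomputable instance : Invertible (Bmat H) :=
  (Bmat H).invertibleOfIsUnitDet (by rw [det_Bmat]; exact isUnit_one)

theorem det_hamMatrix : (hamMatrix H).det = (1 + Bmat H * Amat H).det := by
  have h0 : hamMatrix H = Matrix.fromBlocks (Amat H) 1 (-1) (Bmat H) := rfl
  rw [h0, Matrix.det_fromBlocks₂₂, det_Bmat, one_mul]
  have h2 : Amat H - 1 * ⅟(Bmat H) * (-1) = ⅟(Bmat H) * (Bmat H * Amat H + 1) := by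
    rw [Matrix.one_mul, Matrix.mul_neg, Matrix.mul_one, sub_neg_eq_add]
    rw [Matrix.mul_add, invOf_mul_cancel_left, Matrix.mul_one, add_comm]
  rw [h2, Matrix.det_mul]
  have hdetinv : (⅟(Bmat H)).det = 1 := by
    have h3 := congrArg Matrix.det (mul_invOf_self (Bmat H))
    rw [Matrix.det_mul, det_Bmat, one_mul, Matrix.det_one] at h3
    exact h3
  rw [hdetinv, one_mul, add_comm]

theorem det_one_sub_W_block :
    (Matrix.fromBlocks (1 - W1 H) (-(CM H)) (DM H) (1 - W2 H)).det
      = (1 + Bmat H * Amat H).det := by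
  rw [Matrix.det_fromBlocks₁₁, det_one_sub_W1, one_mul, invOf_one_sub_W1]
  have h1 : (1 - W2 H) - DM H * N1 H * (-(CM H))
      = (1 - W2 H) + UwM H * (Amat H * (UwM H)ᵀ) := by
    rw [Matrix.mul_neg, sub_neg_eq_add, CM_eq, DM_eq]
    congr 1
    rw [← UtN1U]
    simp only [Matrix.mul_assoc]
  rw [h1]
  have h2 : (1 - W2 H) + UwM H * (Amat H * (UwM H)ᵀ)
      = (1 - W2 H) * (1 + N2 H * (UwM H * (Amat H * (UwM H)ᵀ))) := by
    rw [Matrix.mul_add, Matrix.mul_one, ← invOf_one_sub_W2, mul_invOf_cancel_left]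
  rw [h2, Matrix.det_mul, det_one_sub_W2, one_mul]
  have h3 : (1:Matrix H.V2 H.V2 ℤ) + N2 H * (UwM H * (Amat H * (UwM H)ᵀ))
      = 1 + (N2 H * UwM H * Amat H) * (UwM H)ᵀ := by simp only [Matrix.mul_assoc]
  rw [h3, Matrix.det_one_add_mul_comm]
  have h4 : (UwM H)ᵀ * (N2 H * UwM H * Amat H) = Bmat H * Amat H := by
    calc (UwM H)ᵀ * (N2 H * UwM H * Amat H)
        = ((UwM H)ᵀ * N2 H * UwM H) * Amat H := by simp only [Matrix.mul_assoc]
      _ = Bmat H * Amat H := by rw [UwtN2Uw]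
  rw [h4]


section CombSide
variable {k : ℕ} (H : Hamburger k)

theorem E_irrefl : ∀ x, ¬ H.E x x := by
  intro x
  cases x with
  | inl a => exact fun hE => irrefl_of_acyclic' H.acyclic1 hE
  | inr b => exact fun hE => irrefl_of_acyclic' H.acyclic2 hE

noncomputable def wgt : (H.V1 ⊕ H.V2) → (H.V1 ⊕ H.V2) → ℤ := fun x y =>
  if H.E x y then (if x.isRight ∧ y.isLeft then -1 else 1) else 0

theorem wgt_diag : ∀ x, wgt H x x = 0 := fun x => if_neg (E_irrefl H x)

theorem one_sub_wgt_block :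
    (1 : Matrix (H.V1 ⊕ H.V2) (H.V1 ⊕ H.V2) ℤ) - Matrix.of (wgt H)
      = Matrix.fromBlocks (1 - W1 H) (-(CM H)) (DM H) (1 - W2 H) := by
  ext x y
  cases x with
  | inl a =>
    cases y with
    | inl a' =>
      have hw : wgt H (Sum.inl a) (Sum.inl a') = (if H.E1 a a' then (1:ℤ) else 0) := by
        rw [wgt]
        by_cases h1 : H.E (Sum.inl a) (Sum.inl a')
        · rw [if_pos h1, if_neg (by simp), if_pos (show H.E1 a a' from h1)]
        · rw [if_neg h1, if_neg (show ¬ H.E1 a a' from fun h => h1 h)]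
      simp only [Matrix.sub_apply, Matrix.of_apply, Matrix.fromBlocks_apply₁₁, Matrix.one_apply,
        hw, W1]
      by_cases h : a = a'
      · subst h; simp
      · rw [if_neg (by simpa using h), if_neg h]
    | inr b =>
      have hw : wgt H (Sum.inl a) (Sum.inr b)
          = (if ∃ i, a = H.v i ∧ b = H.w i then (1:ℤ) else 0) := by
        rw [wgt]
        by_cases h1 : H.E (Sum.inl a) (Sum.inr b)
        · rw [if_pos h1, if_neg (by simp), if_pos (show ∃ i, a = H.v i ∧ b = H.w i from h1)]
        · rw [if_neg h1, if_neg (show ¬ ∃ i, a = H.v i ∧ b = H.w i from fun h => h1 h)]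
      simp only [Matrix.sub_apply, Matrix.of_apply, Matrix.fromBlocks_apply₁₂, Matrix.one_apply,
        hw, CM, Matrix.neg_apply]
      rw [if_neg (by simp)]
      ring
  | inr b =>
    cases y with
    | inl a =>
      have hw : wgt H (Sum.inr b) (Sum.inl a)
          = (if ∃ i, b = H.w i ∧ a = H.v i then (-1:ℤ) else 0) := by
        rw [wgt]
        by_cases h1 : H.E (Sum.inr b) (Sum.inl a)
        · rw [if_pos h1, if_pos (by simp), if_pos (show ∃ i, b = H.w i ∧ a = H.v i from h1)]
        · rw [if_neg h1, if_neg (show ¬ ∃ i, b = H.w i ∧ a = H.v i from fun h => h1 h)]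
      simp only [Matrix.sub_apply, Matrix.of_apply, Matrix.fromBlocks_apply₂₁, Matrix.one_apply,
        hw, DM]
      rw [if_neg (by simp)]
      split_ifs <;> ring
    | inr b' =>
      have hw : wgt H (Sum.inr b) (Sum.inr b') = (if H.E2 b b' then (1:ℤ) else 0) := by
        rw [wgt]
        by_cases h1 : H.E (Sum.inr b) (Sum.inr b')
        · rw [if_pos h1, if_neg (by simp), if_pos (show H.E2 b b' from h1)]
        · rw [if_neg h1, if_neg (show ¬ H.E2 b b' from fun h => h1 h)]
      simp only [Matrix.sub_apply, Matrix.of_apply, Matrix.fromBlocks_apply₂₂, Matrix.one_apply,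
        hw, W2]
      by_cases h : b = b'
      · subst h; simp
      · rw [if_neg (by simpa using h), if_neg h]

def cond (σ : Equiv.Perm (H.V1 ⊕ H.V2)) : Prop := ∀ x, σ x ≠ x → H.E x (σ x)

noncomputable def mval (σ : Equiv.Perm (H.V1 ⊕ H.V2)) : ℕ := Multiset.card σ.cycleType

noncomputable def lval (σ : Equiv.Perm (H.V1 ⊕ H.V2)) : ℕ :=
  (σ.support.filter fun x => x.isRight ∧ (σ x).isLeft).card

theorem det_one_sub_wgt :
    ((1 : Matrix (H.V1 ⊕ H.V2) (H.V1 ⊕ H.V2) ℤ) - Matrix.of (wgt H)).det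
      = ∑ σ ∈ Finset.univ.filter (fun σ => cond H σ),
          (-1 : ℤ) ^ (mval H σ + lval H σ) := by
  rw [det_one_sub_apply (wgt H) (wgt_diag H), ← Finset.sum_filter_add_sum_filter_not
    Finset.univ (fun σ => cond H σ)]
  have hzero : ∑ σ ∈ Finset.univ.filter (fun σ => ¬ cond H σ),
      (Equiv.Perm.sign σ : ℤ) * ∏ x ∈ σ.support, (-(wgt H x (σ x))) = 0 := by
    refine Finset.sum_eq_zero fun σ hσ => ?_
    rw [Finset.mem_filter] at hσ
    have : ¬ cond H σ := hσ.2
    rw [cond] at this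
    push_neg at this
    obtain ⟨x, hx1, hx2⟩ := this
    apply mul_eq_zero_of_right
    refine Finset.prod_eq_zero (Equiv.Perm.mem_support.mpr hx1) ?_
    rw [wgt, if_neg hx2, neg_zero]
  rw [hzero, add_zero]
  refine Finset.sum_congr rfl fun σ hσ => ?_
  rw [Finset.mem_filter] at hσ
  have hc : cond H σ := hσ.2
  have hprod : ∏ x ∈ σ.support, (-(wgt H x (σ x)))
      = (-1 : ℤ) ^ (σ.support.card - lval H σ) := by
    have hterm : ∀ x ∈ σ.support, (-(wgt H x (σ x)))
        = (if x.isRight ∧ (σ x).isLeft then (1:ℤ) else -1) := by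
      intro x hx
      rw [wgt, if_pos (hc x (Equiv.Perm.mem_support.mp hx))]
      split_ifs <;> simp
    rw [Finset.prod_congr rfl hterm, Finset.prod_ite]
    rw [Finset.prod_const, Finset.prod_const, one_pow, one_mul]
    congr 1
    have htot := Finset.card_filter_add_card_filter_not
      (s := σ.support) (p := fun x => x.isRight ∧ (σ x).isLeft)
    rw [lval]
    omega
  have hsign : ((Equiv.Perm.sign σ : ℤˣ) : ℤ) = (-1:ℤ) ^ (σ.support.card + mval H σ) := by
    rw [Equiv.Perm.sign_of_cycleType]
    push_cast
    rw [Equiv.Perm.sum_cycleType, mval]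
  have hls : lval H σ ≤ σ.support.card := Finset.card_filter_le _ _
  rw [hprod, hsign, ← pow_add]
  have hexp : (σ.support.card + mval H σ) + (σ.support.card - lval H σ)
      = (mval H σ + lval H σ) + 2 * (σ.support.card - lval H σ) := by omega
  rw [hexp, pow_add, pow_mul, neg_one_sq, one_pow, mul_one]

end CombSide


section Count
variable {k : ℕ} (H : Hamburger k)

theorem cs_f_ne (C : CycleSystem H) (x : {x // x ∈ C.S}) : (C.f x).1 ≠ x.1 := by
  intro h
  have h2 := C.hrel x
  rw [h] at h2
  exact E_irrefl H x.1 h2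

noncomputable def toPerm (C : CycleSystem H) : Equiv.Perm (H.V1 ⊕ H.V2) :=
  Equiv.Perm.ofSubtype C.f

theorem toPerm_apply_of_mem (C : CycleSystem H) {x} (hx : x ∈ C.S) :
    toPerm H C x = (C.f ⟨x, hx⟩).1 :=
  Equiv.Perm.ofSubtype_apply_of_mem C.f hx

theorem toPerm_apply_of_not_mem (C : CycleSystem H) {x} (hx : x ∉ C.S) :
    toPerm H C x = x :=
  Equiv.Perm.ofSubtype_apply_of_not_mem C.f hx

theorem toPerm_support (C : CycleSystem H) : (toPerm H C).support = C.S := by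
  ext x
  rw [Equiv.Perm.mem_support]
  constructor
  · intro h
    by_contra hx
    exact h (toPerm_apply_of_not_mem H C hx)
  · intro hx
    rw [toPerm_apply_of_mem H C hx]
    exact cs_f_ne H C ⟨x, hx⟩
  
theorem toPerm_cond (C : CycleSystem H) : cond H (toPerm H C) := by
  intro x hx
  have hmem : x ∈ C.S := by
    by_contra h
    exact hx (toPerm_apply_of_not_mem H C h)
  rw [toPerm_apply_of_mem H C hmem]
  exact C.hrel ⟨x, hmem⟩

theorem cs_ext {C D : CycleSystem H} (hS : C.S = D.S)
    (hf : ∀ x (hx : x ∈ C.S) (hx' : x ∈ D.S), (C.f ⟨x, hx⟩).1 = (D.f ⟨x, hx'⟩).1) :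
    C = D := by
  obtain ⟨S, f, hrel⟩ := C
  obtain ⟨S', f', hrel'⟩ := D
  simp only at hS hf
  subst hS
  have hff : f = f' := by
    apply Equiv.ext
    intro x
    exact Subtype.ext (hf x.1 x.2 x.2)
  subst hff
  rfl

theorem toPerm_inj : Function.Injective (toPerm H) := by
  intro C D h
  have hS : C.S = D.S := by
    rw [← toPerm_support H C, ← toPerm_support H D, h]
  refine cs_ext H hS ?_
  intro x hx hx'
  rw [← toPerm_apply_of_mem H C hx, ← toPerm_apply_of_mem H D hx', h]

noncomputable instance : Fintype (CycleSystem H) := by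
  have : Finite (CycleSystem H) := Finite.of_injective (toPerm H) (toPerm_inj H)
  exact Fintype.ofFinite _

theorem toPerm_surj (σ : Equiv.Perm (H.V1 ⊕ H.V2)) (hσ : cond H σ) :
    ∃ C : CycleSystem H, toPerm H C = σ := by
  refine ⟨⟨σ.support, σ.subtypePerm (fun x => Equiv.Perm.apply_mem_support), ?_⟩, ?_⟩
  · intro x
    exact hσ x.1 (Equiv.Perm.mem_support.mp x.2)
  · apply Equiv.ext
    intro x
    by_cases hx : x ∈ σ.support
    · rw [show ∀ (C : CycleSystem H), toPerm H C = Equiv.Perm.ofSubtype C.f from fun _ => rfl]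
      rw [Equiv.Perm.ofSubtype_apply_of_mem _ hx]
      rfl
    · rw [show ∀ (C : CycleSystem H), toPerm H C = Equiv.Perm.ofSubtype C.f from fun _ => rfl]
      rw [Equiv.Perm.ofSubtype_apply_of_not_mem _ hx]
      exact (Equiv.Perm.notMem_support.mp hx).symm

theorem m_eq (C : CycleSystem H) : mval H (toPerm H C) = C.m := by
  rw [mval, CycleSystem.m, toPerm, Equiv.Perm.cycleType_ofSubtype]

theorem l_eq (C : CycleSystem H) : lval H (toPerm H C) = C.l := by
  rw [lval, CycleSystem.l, toPerm_support]
  refine (Finset.card_bij (fun (x : {x // x ∈ C.S}) _ => x.1) ?_ ?_ ?_).symm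
  · intro x hx
    rw [Finset.mem_filter] at hx ⊢
    refine ⟨x.2, ?_⟩
    have := hx.2
    rw [Bool.and_eq_true] at this
    refine ⟨this.1, ?_⟩
    rw [toPerm_apply_of_mem H C x.2]
    exact this.2
  · intro x hx y hy hxy
    exact Subtype.ext hxy
  · intro b hb
    rw [Finset.mem_filter] at hb
    refine ⟨⟨b, hb.1⟩, ?_, rfl⟩
    rw [Finset.mem_filter]
    refine ⟨Finset.mem_univ _, ?_⟩
    rw [Bool.and_eq_true]
    have h2 := hb.2
    rw [toPerm_apply_of_mem H C hb.1] at h2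
    exact ⟨h2.1, h2.2⟩

theorem sign_eq (C : CycleSystem H) :
    C.sign = (-1 : ℤ) ^ (mval H (toPerm H C) + lval H (toPerm H C)) := by
  rw [m_eq, l_eq, CycleSystem.sign, add_comm]

theorem det_eq_sum_signs :
    ((1 : Matrix (H.V1 ⊕ H.V2) (H.V1 ⊕ H.V2) ℤ) - Matrix.of (wgt H)).det
      = ∑ C : CycleSystem H, C.sign := by
  rw [det_one_sub_wgt]
  refine (Finset.sum_bij (fun (C : CycleSystem H) _ => toPerm H C) ?_ ?_ ?_ ?_).symm
  · intro C _
    rw [Finset.mem_filter]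
    exact ⟨Finset.mem_univ _, toPerm_cond H C⟩
  · intro C _ D _ h
    exact toPerm_inj H h
  · intro σ hσ
    rw [Finset.mem_filter] at hσ
    obtain ⟨C, hC⟩ := toPerm_surj H σ hσ.2
    exact ⟨C, Finset.mem_univ _, hC⟩
  · intro C _
    exact sign_eq H C

theorem sum_sign_count {α : Type} [Fintype α] (g : α → ℤ) (h : ∀ a, g a = 1 ∨ g a = -1) :
    ∑ a, g a = (Nat.card {a // g a = 1} : ℤ) - (Nat.card {a // g a = -1} : ℤ) := by
  classical
  rw [← Finset.sum_filter_add_sum_filter_not Finset.univ (fun a => g a = 1)]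
  have h1 : ∑ a ∈ Finset.univ.filter (fun a => g a = 1), g a
      = ((Finset.univ.filter (fun a => g a = 1)).card : ℤ) := by
    rw [Finset.sum_congr rfl (fun a ha => (Finset.mem_filter.mp ha).2)]
    simp
  have h2 : ∑ a ∈ Finset.univ.filter (fun a => ¬ g a = 1), g a
      = -((Finset.univ.filter (fun a => ¬ g a = 1)).card : ℤ) := by
    have : ∀ a ∈ Finset.univ.filter (fun a => ¬ g a = 1), g a = -1 := by
      intro a ha
      rcases h a with h' | h'
      · exact absurd h' (Finset.mem_filter.mp ha).2
      · exact h'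
    rw [Finset.sum_congr rfl this]
    simp
  rw [h1, h2]
  have e1 : Nat.card {a // g a = 1} = (Finset.univ.filter (fun a => g a = 1)).card := by
    rw [Nat.card_eq_fintype_card, Fintype.card_subtype]
  have e2 : Nat.card {a // g a = -1} = (Finset.univ.filter (fun a => ¬ g a = 1)).card := by
    rw [Nat.card_eq_fintype_card, Fintype.card_subtype]
    congr 1
    apply Finset.filter_congr
    intro a _
    rcases h a with h' | h' <;> simp [h']
  rw [e1, e2]
  ring

end Count

end Ham

/-- **The Hamburger Theorem.** If `H` is a hamburger graph with parameter `k`, then the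
determinant of its hamburger matrix equals `c⁺ - c⁻`, where `c⁺` (resp. `c⁻`) is the
number of positive (resp. negative) cycle systems of `H`. -/
theorem hamburger_theorem {k : ℕ} (hk : 1 ≤ k) (H : Hamburger k) :
    (hamMatrix H).det =
      (Nat.card {C : CycleSystem H // C.sign = 1} : ℤ) -
      (Nat.card {C : CycleSystem H // C.sign = -1} : ℤ) := by
  classical
  rw [Ham.det_hamMatrix H, ← Ham.det_one_sub_W_block H, ← Ham.one_sub_wgt_block H,
    Ham.det_eq_sum_signs H]
  refine Ham.sum_sign_count _ (fun C => ?_)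
  rw [CycleSystem.sign]
  rcases Nat.even_or_odd (C.l + C.m) with h | h
  · left; exact Even.neg_one_pow h
  · right; exact Odd.neg_one_pow h
end

section
/- Every directed cycle in a hamburger graph H with parameter k is either a 2-cycle v_i → w_{k+i} → v_i for some 1 ≤ i ≤ k, or it decomposes as an alternating sequence P_1 → Q_1 → P_2 → Q_2 → ⋯ → P_l → Q_l (for some l ≥ 1), where each P_j is a directed path in G1, each Q_j is a directed path in G2, each P_j is joined to Q_j by an edge of the form v_i → w_{k+i}, each Q_j is joined to P_{j+1} by an edge of the form w_{k+i} → v_i, and the terminal vertex of Q_l is joined to the initial vertex of P_1 by an edge of the form w_{k+i} → v_i. -/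
/-- `p` is (the list of vertices of) a nonempty directed path in the digraph with edge
relation `R`. -/
def IsPathList {V : Type} (R : V → V → Prop) (p : List V) : Prop :=
  p ≠ [] ∧ p.Chain' R ∧ p.Nodup

/-! ### Auxiliary lemmas -/

abbrev CycChain {α : Type} (R : α → α → Prop) (l : List α) : Prop :=
  l.Chain' R ∧ ∀ a ∈ l.getLast?, ∀ b ∈ l.head?, R a b

lemma isCycleList_iff {α : Type} (R : α → α → Prop) (l : List α) :
    IsCycleList R l ↔ l ≠ [] ∧ l.Nodup ∧ CycChain R l := by
  cases l with
  | nil => simp [IsCycleList]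
  | cons a t =>
    show ((a :: t).Nodup ∧ List.Chain R a (t ++ [a])) ↔ _
    have h1 : List.Chain R a (t ++ [a]) ↔ List.Chain' R ((a :: t) ++ [a]) := Iff.rfl
    rw [h1, show List.Chain' R ((a :: t) ++ [a]) ↔ _ from List.isChain_append]
    simp only [ne_eq, reduceCtorEq, not_false_iff, true_and, CycChain]
    constructor
    · rintro ⟨hn, hc, -, he⟩
      exact ⟨hn, hc, fun x hx b hb => by
        simp only [List.head?_cons, Option.mem_def, Option.some_inj] at hb
        exact hb ▸ he x hx a (by simp)⟩
    · rintro ⟨hn, hc, he⟩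
      exact ⟨hn, hc, List.isChain_singleton a, fun x hx y hy => by
        simp only [List.head?_cons, Option.mem_def, Option.some_inj] at hy
        exact hy ▸ he x hx a (by simp)⟩

lemma cycChain_append_comm {α : Type} {R : α → α → Prop} {l₁ l₂ : List α}
    (h : CycChain R (l₁ ++ l₂)) : CycChain R (l₂ ++ l₁) := by
  rcases eq_or_ne l₁ [] with rfl | h1
  · simpa using h
  rcases eq_or_ne l₂ [] with rfl | h2
  · simpa using h
  obtain ⟨hc, hw⟩ := h
  replace hc := List.isChain_append.mp hc
  obtain ⟨hc1, hc2, he⟩ := hc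
  have hl1 : l₁.getLast? = some (l₁.getLast h1) := List.getLast?_eq_getLast h1
  have hl2 : l₂.getLast? = some (l₂.getLast h2) := List.getLast?_eq_getLast h2
  have hh1 : l₁.head? = some (l₁.head h1) := List.head?_eq_head h1
  have hh2 : l₂.head? = some (l₂.head h2) := List.head?_eq_head h2
  constructor
  · refine List.isChain_append.mpr ?_
    refine ⟨hc2, hc1, fun x hx y hy => ?_⟩
    rw [hl2, Option.mem_def, Option.some_inj] at hx
    rw [hh1, Option.mem_def, Option.some_inj] at hy
    apply hw
    · rw [List.getLast?_append, hl2, hx]; simp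
    · rw [List.head?_append, hh1, hy]; simp
  · intro x hx y hy
    rw [List.getLast?_append, hl1] at hx
    rw [List.head?_append, hh2] at hy
    simp only [hl2, hh1, Option.or_some, Option.mem_def, Option.some_inj] at hx hy ⊢
    subst hx; subst hy
    exact he _ (by rw [hl1]; rfl) _ (by rw [hh2]; rfl)

lemma exists_map_inl {α β : Type} {l : List (α ⊕ β)}
    (h : ∀ x ∈ l, x.isLeft) : ∃ A : List α, l = A.map Sum.inl := by
  induction l with
  | nil => exact ⟨[], rfl⟩
  | cons x t ih =>
    obtain ⟨a, rfl⟩ := Sum.isLeft_iff.mp (h x (by simp))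
    obtain ⟨A, rfl⟩ := ih (fun y hy => h y (by simp [hy]))
    exact ⟨a :: A, rfl⟩

lemma exists_map_inr {α β : Type} {l : List (α ⊕ β)}
    (h : ∀ x ∈ l, x.isRight) : ∃ B : List β, l = B.map Sum.inr := by
  induction l with
  | nil => exact ⟨[], rfl⟩
  | cons x t ih =>
    obtain ⟨a, rfl⟩ := Sum.isRight_iff.mp (h x (by simp))
    obtain ⟨B, rfl⟩ := ih (fun y hy => h y (by simp [hy]))
    exact ⟨a :: B, rfl⟩

lemma mem_of_getLast?_aux {γ : Type} {l : List γ} {x : γ} (h : l.getLast? = some x) : x ∈ l := by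
  have hne : l ≠ [] := by rintro rfl; simp at h
  rw [List.getLast?_eq_getLast hne, Option.some_inj] at h
  exact h ▸ List.getLast_mem hne

lemma split_blocks {α β : Type} : ∀ (n : ℕ) (p : List (α ⊕ β)), p.length ≤ n →
    (∃ a, p.head? = some (Sum.inl a)) → (∃ b, p.getLast? = some (Sum.inr b)) →
    ∃ L : List (List α × List β), L ≠ [] ∧ (∀ pr ∈ L, pr.1 ≠ [] ∧ pr.2 ≠ []) ∧
      p = L.flatMap (fun pr => pr.1.map Sum.inl ++ pr.2.map Sum.inr) := by
  intro n
  induction n with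
  | zero =>
    rintro p hlen ⟨a, ha⟩ -
    have : p = [] := List.length_eq_zero_iff.mp (Nat.le_zero.mp hlen)
    subst this; simp at ha
  | succ n ih =>
    rintro p hlen ⟨a, ha⟩ ⟨b, hb⟩
    have hpne : p ≠ [] := by rintro rfl; simp at ha
    set A' := p.takeWhile (·.isLeft) with hA'
    set R' := p.dropWhile (·.isLeft) with hR'
    have hsplit : A' ++ R' = p := List.takeWhile_append_dropWhile
    have hA'ne : A' ≠ [] := by
      obtain ⟨x, t, rfl⟩ := List.exists_cons_of_ne_nil hpne
      simp only [List.head?_cons, Option.some_inj] at ha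
      rw [hA', List.takeWhile_cons_of_pos (by simp [ha])]
      simp
    obtain ⟨A, hA⟩ := exists_map_inl (l := A') (fun x hx => List.mem_takeWhile_imp hx)
    have hAne : A ≠ [] := by rintro rfl; exact hA'ne hA
    have hR'ne : R' ≠ [] := by
      intro hR'e
      have hpA : p = A' := by rw [← hsplit, hR'e, List.append_nil]
      have hmem : Sum.inr b ∈ p := mem_of_getLast?_aux hb
      rw [hpA, hA] at hmem
      simp at hmem
    have hR'head : ¬ (R'.head hR'ne).isLeft := by
      have := List.head_dropWhile_not (fun x : α ⊕ β => x.isLeft) (l := p) hR'ne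
      simpa using this
    set B' := R'.takeWhile (·.isRight) with hB'
    set rest := R'.dropWhile (·.isRight) with hrest
    have hsplit2 : B' ++ rest = R' := List.takeWhile_append_dropWhile
    have hB'ne : B' ≠ [] := by
      obtain ⟨x, t, hxt⟩ := List.exists_cons_of_ne_nil hR'ne
      have h1 : R'.head? = some x := by rw [hxt]; rfl
      have h2 : R'.head? = some (R'.head hR'ne) := List.head?_eq_head _
      rw [h1, Option.some_inj] at h2
      rw [← h2] at hR'head
      have hx : x.isRight := by
        rcases x with y | y
        · exact absurd rfl hR'head
        · rfl
      rw [hB', hxt, List.takeWhile_cons_of_pos hx]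
      simp
    obtain ⟨B, hB⟩ := exists_map_inr (l := B') (fun x hx => List.mem_takeWhile_imp hx)
    have hBne : B ≠ [] := by rintro rfl; exact hB'ne hB
    rcases eq_or_ne rest [] with hre | hrne
    · refine ⟨[(A, B)], by simp, by simp [hAne, hBne], ?_⟩
      rw [← hsplit, ← hsplit2, hre, List.append_nil, hA, hB]
      simp
    · have hrlen : rest.length ≤ n := by
        have h1 : A'.length + R'.length = p.length := by rw [← hsplit]; simp
        have h2 : B'.length + rest.length = R'.length := by rw [← hsplit2]; simp
        have h3 : 1 ≤ A'.length := List.length_pos_iff.mpr hA'ne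
        omega
      have hrhead : ∃ a', rest.head? = some (Sum.inl a') := by
        obtain ⟨x, t, hxt⟩ := List.exists_cons_of_ne_nil hrne
        have h1 : rest.head? = some x := by rw [hxt]; rfl
        have h2 : rest.head? = some (rest.head hrne) := List.head?_eq_head _
        rw [h1, Option.some_inj] at h2
        have hnr := List.head_dropWhile_not (fun x : α ⊕ β => x.isRight) (l := R') hrne
        rw [← h2] at hnr
        rcases x with y | y
        · exact ⟨y, h1⟩
        · simp at hnr
      have hrlast : ∃ b', rest.getLast? = some (Sum.inr b') := by
        refine ⟨b, ?_⟩
        rw [← hsplit, ← hsplit2] at hb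
        rw [List.getLast?_append, List.getLast?_append] at hb
        rw [List.getLast?_eq_getLast hrne] at hb ⊢
        simpa using hb
      obtain ⟨L, hLne, hLblocks, hLeq⟩ := ih rest hrlen hrhead hrlast
      refine ⟨(A, B) :: L, by simp, ?_, ?_⟩
      · rintro pr hpr
        rcases List.mem_cons.mp hpr with rfl | hpr
        · exact ⟨hAne, hBne⟩
        · exact hLblocks pr hpr
      · rw [List.flatMap_cons, ← hLeq, ← hsplit, ← hsplit2, hA, hB]
        simp

section HamburgerLemmas

variable {k : ℕ} (H : Hamburger k)

def hamF (pr : List H.V1 × List H.V2) : List (H.V1 ⊕ H.V2) :=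
  pr.1.map Sum.inl ++ pr.2.map Sum.inr

lemma cycle_map_inl (p1 : List H.V1) (h : IsCycleList H.E (p1.map Sum.inl)) : False := by
  apply H.acyclic1 p1
  rw [isCycleList_iff] at h ⊢
  obtain ⟨hne, hnd, hc, hw⟩ := h
  refine ⟨by simpa using hne, List.Nodup.of_map _ hnd, ?_, ?_⟩
  · exact ((List.isChain_map _).mp hc).imp (fun a b h => h)
  · intro a ha b hb
    exact hw (Sum.inl a) (by simp [List.getLast?_map, Option.mem_def.mp ha])
      (Sum.inl b) (by simp [List.head?_map, Option.mem_def.mp hb])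

lemma cycle_map_inr (p2 : List H.V2) (h : IsCycleList H.E (p2.map Sum.inr)) : False := by
  apply H.acyclic2 p2
  rw [isCycleList_iff] at h ⊢
  obtain ⟨hne, hnd, hc, hw⟩ := h
  refine ⟨by simpa using hne, List.Nodup.of_map _ hnd, ?_, ?_⟩
  · exact ((List.isChain_map _).mp hc).imp (fun a b h => h)
  · intro a ha b hb
    exact hw (Sum.inr a) (by simp [List.getLast?_map, Option.mem_def.mp ha])
      (Sum.inr b) (by simp [List.head?_map, Option.mem_def.mp hb])

lemma flat_head? (x : List H.V1 × List H.V2) (L' : List (List H.V1 × List H.V2))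
    (h1 : x.1 ≠ []) :
    ((x :: L').flatMap (hamF H)).head? = some (Sum.inl (x.1.head h1)) := by
  rw [List.flatMap_cons, List.head?_append]
  simp only [hamF]
  rw [List.head?_append, List.head?_map, List.head?_eq_head h1]
  rfl

lemma flat_getLast? : ∀ (L : List (List H.V1 × List H.V2)) (hL : L ≠ [])
    (hb : ∀ pr ∈ L, pr.2 ≠ []),
    (L.flatMap (hamF H)).getLast? = some (Sum.inr (((L.getLast hL).2).getLast (hb _ (List.getLast_mem hL)))) := by
  intro L
  induction L with
  | nil => simp
  | cons x L' ih =>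
    intro hL hb
    cases L' with
    | nil =>
      have h2 : x.2 ≠ [] := (hb x (by simp))
      simp only [List.flatMap_cons, List.flatMap_nil, List.append_nil, hamF]
      rw [List.getLast?_append, List.getLast?_map, List.getLast?_eq_getLast h2]
      rfl
    | cons y L'' =>
      have hne : (y :: L'') ≠ ([] : List (List H.V1 × List H.V2)) := by simp
      rw [List.flatMap_cons, List.getLast?_append,
        ih hne (fun pr hpr => hb pr (by simp [List.mem_cons.mp hpr]))]
      rw [show ∀ (a : H.V1 ⊕ H.V2) (o : Option (H.V1 ⊕ H.V2)), (some a).or o = some a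
        from fun a o => rfl]
      congr 1

lemma blocks_cond : ∀ (L : List (List H.V1 × List H.V2)),
    (∀ pr ∈ L, pr.1 ≠ [] ∧ pr.2 ≠ []) → (L.flatMap (hamF H)).Chain' H.E →
    (∀ pr ∈ L, pr.1.Chain' H.E1 ∧ pr.2.Chain' H.E2 ∧
       ∃ i, pr.1.getLast? = some (H.v i) ∧ pr.2.head? = some (H.w i)) ∧
    L.Chain' (fun x y => ∃ i, x.2.getLast? = some (H.w i) ∧ y.1.head? = some (H.v i)) := by
  intro L
  induction L with
  | nil => simp [List.Chain']
  | cons x L' ih =>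
    intro hblocks hc
    obtain ⟨h1, h2⟩ := hblocks x (by simp)
    rw [List.flatMap_cons] at hc; replace hc := List.isChain_append.mp hc
    obtain ⟨hcx, hcrest, hedge⟩ := hc
    have hx : x.1.Chain' H.E1 ∧ x.2.Chain' H.E2 ∧
        ∃ i, x.1.getLast? = some (H.v i) ∧ x.2.head? = some (H.w i) := by
      rw [hamF, List.isChain_append] at hcx
      obtain ⟨hc1, hc2, he⟩ := hcx
      refine ⟨((List.isChain_map _).mp hc1).imp (fun a b h => h),
              ((List.isChain_map _).mp hc2).imp (fun a b h => h), ?_⟩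
      have ha0 : x.1.getLast? = some (x.1.getLast h1) := List.getLast?_eq_getLast h1
      have hb0 : x.2.head? = some (x.2.head h2) := List.head?_eq_head h2
      have := he (Sum.inl (x.1.getLast h1)) (by rw [List.getLast?_map, ha0]; rfl)
                 (Sum.inr (x.2.head h2)) (by rw [List.head?_map, hb0]; rfl)
      obtain ⟨i, hi1, hi2⟩ := this
      exact ⟨i, by rw [ha0, hi1], by rw [hb0, hi2]⟩
    obtain ⟨hrest1, hrest2⟩ := ih (fun pr hpr => hblocks pr (by simp [hpr])) hcrest
    refine ⟨?_, ?_⟩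
    · rintro pr hpr
      rcases List.mem_cons.mp hpr with rfl | hpr
      · exact hx
      · exact hrest1 pr hpr
    · refine List.isChain_cons.mpr ?_
      refine ⟨?_, hrest2⟩
      intro y hy
      cases L' with
      | nil => simp at hy
      | cons z L'' =>
        simp only [List.head?_cons, Option.mem_def, Option.some_inj] at hy
        subst hy
        obtain ⟨hz1, hz2⟩ := hblocks z (by simp)
        have hlast : (hamF H x).getLast? = some (Sum.inr (x.2.getLast h2)) := by
          rw [hamF, List.getLast?_append, List.getLast?_map, List.getLast?_eq_getLast h2]
          rfl
        have hhead := flat_head? H z L'' hz1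
        have := hedge _ hlast _ hhead
        obtain ⟨i, hi1, hi2⟩ := this
        exact ⟨i, by rw [List.getLast?_eq_getLast h2, hi1],
          by rw [List.head?_eq_head hz1, hi2]⟩

lemma blocks_nodup : ∀ (L : List (List H.V1 × List H.V2)),
    (L.flatMap (hamF H)).Nodup → ∀ pr ∈ L, pr.1.Nodup ∧ pr.2.Nodup := by
  intro L
  induction L with
  | nil => simp
  | cons x L' ih =>
    intro h pr hpr
    rw [List.flatMap_cons] at h
    rcases List.mem_cons.mp hpr with rfl | hpr
    · have h1 := h.of_append_left
      simp only [hamF] at h1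
      exact ⟨List.Nodup.of_map _ h1.of_append_left, List.Nodup.of_map _ h1.of_append_right⟩
    · exact ih h.of_append_right pr hpr

end HamburgerLemmas

lemma get_congr_aux {γ : Type} (l : List γ) {a b : ℕ} (h : a = b) (ha : a < l.length)
    (hb : b < l.length) : l.get ⟨a, ha⟩ = l.get ⟨b, hb⟩ := by subst h; rfl

lemma flatMap_finRange {γ δ : Type} (l : List γ) (f : γ → List δ) :
    (List.finRange l.length).flatMap (fun j => f (l.get j)) = l.flatMap f := by
  conv_rhs => rw [← List.map_get_finRange l]
  rw [List.flatMap_map]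

/-- Every directed cycle of a hamburger graph is either a 2-cycle `v i → w i → v i`, or
decomposes as an alternating cyclic sequence `P 0 → Q 0 → P 1 → Q 1 → ⋯ → P m → Q m`
(with `m + 1 ≥ 1` blocks) where each `P j` is a directed path in `G1`, each `Q j` is a
directed path in `G2`, each `P j` is joined to `Q j` by an edge `v i → w i` of `E3`,
and each `Q j` is joined to `P (j+1)` (cyclically, so the last `Q` is joined to `P 0`)
by an edge `w i → v i` of `E3`. -/
theorem cycle_decomposition {k : ℕ} (hk : 1 ≤ k) (H : Hamburger k)
    (p : List (H.V1 ⊕ H.V2)) (hp : IsCycleList H.E p) :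
    (∃ i : Fin k, p.IsRotated [Sum.inl (H.v i), Sum.inr (H.w i)]) ∨
      ∃ (m : ℕ) (P : Fin (m + 1) → List H.V1) (Q : Fin (m + 1) → List H.V2),
        (∀ j, IsPathList H.E1 (P j)) ∧ (∀ j, IsPathList H.E2 (Q j)) ∧
        (∀ j, ∃ i : Fin k, (P j).getLast? = some (H.v i) ∧ (Q j).head? = some (H.w i)) ∧
        (∀ j, ∃ i : Fin k, (Q j).getLast? = some (H.w i) ∧ (P (j + 1)).head? = some (H.v i)) ∧
        p.IsRotated ((List.finRange (m + 1)).flatMap fun j =>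
          (P j).map Sum.inl ++ (Q j).map Sum.inr) := by
  have hp' := hp
  rw [isCycleList_iff] at hp'
  obtain ⟨hpne, hpnd, hpcyc⟩ := hp'
  -- p contains an inr element
  rcases Classical.em (∀ x ∈ p, x.isLeft = true) with hcase1 | hcase1
  · obtain ⟨p1, rfl⟩ := exists_map_inl hcase1
    exact absurd hp (fun h => cycle_map_inl H p1 h)
  rcases Classical.em (∀ x ∈ p, x.isRight = true) with hcase2 | hcase2
  · obtain ⟨p2, rfl⟩ := exists_map_inr hcase2
    exact absurd hp (fun h => cycle_map_inr H p2 h)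
  push_neg at hcase1 hcase2
  obtain ⟨x, hxp, hxr⟩ := hcase1
  have hxr : x.isRight = true := by
    rcases x with a | a
    · exact absurd rfl hxr
    · rfl
  obtain ⟨s, t, rfl⟩ := List.append_of_mem hxp
  -- rotate to start at x (an inr element)
  set q : List (H.V1 ⊕ H.V2) := (x :: t) ++ s with hq
  have hqrot : (s ++ x :: t).IsRotated q := List.isRotated_append
  have hqcyc : CycChain H.E q := cycChain_append_comm hpcyc
  have hqnd : q.Nodup := hqrot.nodup_iff.mp hpnd
  have hqne : q ≠ [] := by simp [hq]
  -- split q into the isRight prefix and the remainder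
  set A' := q.takeWhile (·.isRight) with hA'
  set B'' := q.dropWhile (·.isRight) with hB''
  have hsplitq : A' ++ B'' = q := List.takeWhile_append_dropWhile
  have hA'ne : A' ≠ [] := by
    rw [hA', hq, List.cons_append, List.takeWhile_cons_of_pos hxr]
    simp
  have hB''ne : B'' ≠ [] := by
    intro hB''e
    obtain ⟨y, hyp, hyl⟩ := hcase2
    have hyq : y ∈ q := (hqrot.perm.mem_iff).mp hyp
    rw [← hsplitq, hB''e, List.append_nil] at hyq
    exact hyl (List.mem_takeWhile_imp hyq)
  set q2 : List (H.V1 ⊕ H.V2) := B'' ++ A' with hq2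
  have hrot2 : (s ++ x :: t).IsRotated q2 := by
    refine hqrot.trans ?_
    rw [← hsplitq]
    exact List.isRotated_append
  have hq2cyc : CycChain H.E q2 := by
    apply cycChain_append_comm
    rw [hsplitq]; exact hqcyc
  have hq2nd : q2.Nodup := (hrot2.nodup_iff).mp hpnd
  -- head of q2 is inl, last of q2 is inr
  have hq2head : ∃ a, q2.head? = some (Sum.inl a) := by
    obtain ⟨z, u, hzu⟩ := List.exists_cons_of_ne_nil hB''ne
    have h1 : B''.head? = some z := by rw [hzu]; rfl
    have h2 : B''.head? = some (B''.head hB''ne) := List.head?_eq_head _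
    rw [h1, Option.some_inj] at h2
    have hnr := List.head_dropWhile_not (fun x : H.V1 ⊕ H.V2 => x.isRight) (l := q) hB''ne
    rw [← h2] at hnr
    rcases z with a | a
    · refine ⟨a, ?_⟩
      rw [hq2, List.head?_append, h1]
      rfl
    · simp at hnr
  have hq2last : ∃ b, q2.getLast? = some (Sum.inr b) := by
    have hmem : A'.getLast hA'ne ∈ A' := List.getLast_mem hA'ne
    have hr : (A'.getLast hA'ne).isRight := List.mem_takeWhile_imp hmem
    obtain ⟨b, hbe⟩ := Sum.isRight_iff.mp hr
    refine ⟨b, ?_⟩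
    rw [hq2, List.getLast?_append, List.getLast?_eq_getLast hA'ne, hbe]
    rfl
  -- split q2 into blocks
  obtain ⟨L, hLne, hLblocks, hLeq⟩ := split_blocks q2.length q2 le_rfl hq2head hq2last
  have hLeq' : q2 = L.flatMap (hamF H) := hLeq
  obtain ⟨pr0, L1, rfl⟩ := List.exists_cons_of_ne_nil hLne
  have hq2chain : (((pr0 :: L1)).flatMap (hamF H)).Chain' H.E := by
    rw [← hLeq']; exact hq2cyc.1
  obtain ⟨hcond1, hcond2⟩ := blocks_cond H (pr0 :: L1) hLblocks hq2chain
  have hnodups := blocks_nodup H (pr0 :: L1) (by rw [← hLeq']; exact hq2nd)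
  -- wraparound edge
  have hlg : (pr0 :: L1).getLast (by simp) = (pr0 :: L1).get ⟨L1.length, by simp⟩ := by
    rw [List.getLast_eq_getElem]
    rfl
  have hwrap : ∃ i : Fin k,
      (((pr0 :: L1).get ⟨L1.length, by simp⟩).2).getLast? = some (H.w i) ∧
      pr0.1.head? = some (H.v i) := by
    rw [← hlg]
    have hlast := flat_getLast? H (pr0 :: L1) (by simp)
      (fun pr hpr => (hLblocks pr hpr).2)
    have hhead := flat_head? H pr0 L1 (hLblocks pr0 (by simp)).1
    have hE := hq2cyc.2 _ (by rw [hLeq']; exact hlast) _ (by rw [hLeq']; exact hhead)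
    obtain ⟨i, hi1, hi2⟩ := hE
    refine ⟨i, ?_, ?_⟩
    · rw [List.getLast?_eq_getLast ((hLblocks _ (List.getLast_mem (by simp))).2), hi1]
    · rw [List.head?_eq_head (hLblocks pr0 (by simp)).1, hi2]
  -- assemble
  refine Or.inr ⟨L1.length, fun j => ((pr0 :: L1).get j).1, fun j => ((pr0 :: L1).get j).2,
    ?_, ?_, ?_, ?_, ?_⟩
  · intro j
    have hmem : (pr0 :: L1).get j ∈ pr0 :: L1 := List.get_mem _ _
    exact ⟨(hLblocks _ hmem).1, (hcond1 _ hmem).1, (hnodups _ hmem).1⟩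
  · intro j
    have hmem : (pr0 :: L1).get j ∈ pr0 :: L1 := List.get_mem _ _
    exact ⟨(hLblocks _ hmem).2, (hcond1 _ hmem).2.1, (hnodups _ hmem).2⟩
  · intro j
    have hmem : (pr0 :: L1).get j ∈ pr0 :: L1 := List.get_mem _ _
    exact (hcond1 _ hmem).2.2
  · intro j
    by_cases hj : j = Fin.last L1.length
    · subst hj
      rw [Fin.last_add_one]
      obtain ⟨i, hi1, hi2⟩ := hwrap
      exact ⟨i, hi1, hi2⟩
    · have hjlt : j.1 < L1.length := by
        have := j.2
        simp only [Fin.ext_iff, Fin.val_last] at hj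
        omega
      have htrans := List.isChain_iff_getElem.mp hcond2 j.1 (Nat.succ_lt_succ hjlt)
      obtain ⟨i, hi1, hi2⟩ := htrans
      refine ⟨i, hi1, ?_⟩
      have hv1 : ((j + 1 : Fin (L1.length + 1))).val = j.val + 1 := by
        rw [Fin.val_add_one, if_neg hj]
      show ((pr0 :: L1).get ⟨((j + 1 : Fin (L1.length + 1)) : ℕ),
        (j + 1 : Fin (L1.length + 1)).isLt⟩).1.head? = some (H.v i)
      rw [get_congr_aux (pr0 :: L1) hv1 (j + 1 : Fin (L1.length + 1)).isLt
        (by simpa using Nat.succ_lt_succ hjlt)]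
      exact hi2
  · have hfin : ((List.finRange (L1.length + 1)).flatMap fun j =>
        ((pr0 :: L1).get j).1.map Sum.inl ++ ((pr0 :: L1).get j).2.map Sum.inr)
        = (pr0 :: L1).flatMap (hamF H) := flatMap_finRange (pr0 :: L1) (hamF H)
    convert hrot2 using 1
    rw [hLeq']
    exact hfin
end

section
/- For every n ≥ 1, the digraph D_n of the Aztec diamond AD_n is a hamburger graph with parameter n: the subgraph induced on the upper-half vertices is acyclic and admits a directed path from v_i to v_j only if i < j, the subgraph induced on the lower-half vertices is acyclic and admits a directed path from w_{n+i} to w_{n+j} only if i > j, and the remaining edges are exactly v_i → w_{n+i} and w_{n+i} → v_i for 1 ≤ i ≤ n. -/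
/-- Two unit squares of the plane (indexed by their lower-left corners) are
edge-adjacent. -/
def SqAdj (p q : ℤ × ℤ) : Prop :=
  (q.1 = p.1 + 1 ∧ q.2 = p.2) ∨ (q.1 = p.1 - 1 ∧ q.2 = p.2) ∨
    (q.1 = p.1 ∧ q.2 = p.2 + 1) ∨ (q.1 = p.1 ∧ q.2 = p.2 - 1)

/-- A domino tiling of a region `S` (a set of unit squares, each indexed by its
lower-left corner): a partition of the squares of `S` into dominoes, i.e. pairs of
edge-adjacent squares; it is encoded by the involution `m` matching each square of `S`
with the other square of its domino (normalized to be the identity off `S`). -/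
def IsDominoTiling (S : Set (ℤ × ℤ)) (m : ℤ × ℤ → ℤ × ℤ) : Prop :=
  (∀ p ∈ S, m p ∈ S ∧ m (m p) = p ∧ SqAdj p (m p)) ∧ ∀ p, p ∉ S → m p = p

/-- The number of domino tilings of the region `S`. -/
noncomputable def numTilings (S : Set (ℤ × ℤ)) : ℕ :=
  Nat.card {m : ℤ × ℤ → ℤ × ℤ // IsDominoTiling S m}

/-- The Aztec diamond `AD n`, as the set of the unit squares, indexed by their lower-left
corners, all of whose corners `(a, b)` satisfy `|a| + |b| ≤ n + 1`. -/
def ADset (n : ℕ) : Set (ℤ × ℤ) :=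
  {p | |p.1| + |p.2| ≤ (n : ℤ) + 1 ∧ |p.1 + 1| + |p.2| ≤ (n : ℤ) + 1 ∧
       |p.1| + |p.2 + 1| ≤ (n : ℤ) + 1 ∧ |p.1 + 1| + |p.2 + 1| ≤ (n : ℤ) + 1}

/-- The vertices of the digraph `D n` of the Aztec diamond `AD n`: one vertex at the
center of each horizontal domino of the natural tiling of `AD n`; the domino is indexed
by its left square `p`, so that it consists of the squares `p` and `(p.1 + 1, p.2)` of
`AD n`, and the parity condition singles out the dominoes of the natural tiling (in each
row of `AD n` the dominoes of the natural tiling cover the row from its west end). -/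
def adVertex (n : ℕ) (p : ℤ × ℤ) : Prop :=
  p ∈ ADset n ∧ (p.1 + 1, p.2) ∈ ADset n ∧
    Even (p.1 + (n : ℤ) + 1 + max |p.2| |p.2 + 1|)

/-- The edges of the digraph `D n` of the Aztec diamond `AD n`.  From each vertex of the
upper half (dominoes in the half-plane `y > 0`, i.e. rows `p.2 ≥ 0`) there are edges to
the vertices immediately east, northeast and southeast of it (whenever these are
vertices); from each vertex of the lower half there are edges to the vertices
immediately west, southwest and northwest of it; and for each of the `n` vertices
`v i = (-n + 2i, 0)` of the lowest row of the upper half there are edges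
`v i → w i` and `w i → v i` to and from the vertex `w i = (-n + 2i, -1)` of the
highest row of the lower half directly below it. -/
def adEdge (n : ℕ) (p q : ℤ × ℤ) : Prop :=
  adVertex n p ∧ adVertex n q ∧
    ((0 ≤ p.2 ∧ (q = (p.1 + 2, p.2) ∨ q = (p.1 + 1, p.2 + 1) ∨ q = (p.1 + 1, p.2 - 1))) ∨
     (p.2 < 0 ∧ (q = (p.1 - 2, p.2) ∨ q = (p.1 - 1, p.2 - 1) ∨ q = (p.1 - 1, p.2 + 1))) ∨
     (p.2 = 0 ∧ q = (p.1, -1)) ∨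
     (p.2 = -1 ∧ q = (p.1, 0)))

/-- The upper half of the digraph of the Aztec diamond: edges of `D n` joining two
vertices of the upper half. -/
def upperE (n : ℕ) (p q : ℤ × ℤ) : Prop := adEdge n p q ∧ 0 ≤ p.2 ∧ 0 ≤ q.2

/-- The lower half of the digraph of the Aztec diamond. -/
def lowerE (n : ℕ) (p q : ℤ × ℤ) : Prop := adEdge n p q ∧ p.2 < 0 ∧ q.2 < 0

/-- The distinguished vertex `v i` (for `i = 1, …, n`, west to east) of the digraph of
the Aztec diamond: the `i`-th vertex of the lowest row of the upper half. -/
def adV (n : ℕ) (i : Fin n) : ℤ × ℤ := (-(n : ℤ) + 2 * (i : ℕ), 0)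

/-- The distinguished vertex `w i` (i.e. `w_{n+i}`, for `i = 1, …, n`, west to east) of
the digraph of the Aztec diamond: the `i`-th vertex of the highest row of the lower
half. -/
def adW (n : ℕ) (i : Fin n) : ℤ × ℤ := (-(n : ℤ) + 2 * (i : ℕ), -1)

lemma adVertex_iff (n : ℕ) (x y : ℤ) (hy : y = 0 ∨ y = -1) :
    adVertex n (x, y) ↔ -(n:ℤ) ≤ x ∧ x + 2 ≤ n ∧ (x + n) % 2 = 0 := by
  rcases hy with rfl | rfl <;>
    simp only [adVertex, ADset, Set.mem_setOf_eq, Int.even_iff, Int.abs_eq_natAbs] <;>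
    omega

lemma upperE_lt {n : ℕ} {p q : ℤ × ℤ} (h : upperE n p q) : p.1 < q.1 := by
  obtain ⟨⟨-, -, hc⟩, hp2, hq2⟩ := h
  rcases hc with ⟨-, rfl | rfl | rfl⟩ | ⟨h, -⟩ | ⟨h, rfl⟩ | ⟨h, -⟩ <;> (try simp at *) <;> omega

lemma lowerE_lt {n : ℕ} {p q : ℤ × ℤ} (h : lowerE n p q) : q.1 < p.1 := by
  obtain ⟨⟨-, -, hc⟩, hp2, hq2⟩ := h
  rcases hc with ⟨h, -⟩ | ⟨-, rfl | rfl | rfl⟩ | ⟨h, rfl⟩ | ⟨h, rfl⟩ <;> (try simp at *) <;> omega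

lemma chain_lt {V : Type} {R : V → V → Prop} {f : V → ℤ}
    (hR : ∀ x y, R x y → f x < f y) :
    ∀ (l : List V) (a b : V), List.Chain R a l → b ∈ l → f a < f b := by
  intro l
  induction l with
  | nil => simp
  | cons c l ih =>
    intro a b hc hb
    replace hc : R a c ∧ List.Chain R c l := List.chain_cons.mp hc
    rcases List.mem_cons.mp hb with rfl | hb
    · exact hR _ _ hc.1
    · exact lt_trans (hR _ _ hc.1) (ih c b hc.2 hb)

lemma no_cycle {V : Type} {R : V → V → Prop} (f : V → ℤ)
    (hR : ∀ x y, R x y → f x < f y) (p : List V) : ¬ IsCycleList R p := by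
  intro hp
  cases p with
  | nil => exact hp
  | cons a l =>
    obtain ⟨-, hc⟩ := hp
    exact lt_irrefl _ (chain_lt hR _ a a hc (by simp))

lemma path_le {V : Type} {R : V → V → Prop} (f : V → ℤ)
    (hR : ∀ x y, R x y → f x < f y) {a b : V} {p : List V}
    (h : IsDirPath R a b p) : a = b ∨ f a < f b := by
  obtain ⟨hc, hh, hl, -⟩ := h
  cases p with
  | nil => simp at hh
  | cons x t =>
    simp only [List.head?_cons, Option.some.injEq] at hh
    subst hh
    cases t with
    | nil => simp at hl; exact Or.inl hl
    | cons y s =>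
      right
      have hb : b ∈ y :: s := by
        rw [List.getLast?_cons_cons] at hl
        obtain ⟨h', rfl⟩ := List.mem_getLast?_eq_getLast hl
        exact List.getLast_mem h'
      exact chain_lt hR _ x b hc hb

/-- The digraph `D n` of the Aztec diamond `AD n` is a hamburger graph with parameter
`n`: its distinguished vertices `v i` and `w i` are vertices; the subgraph induced on the
upper-half vertices is acyclic and admits a directed path from `v i` to `v j` only if
`i < j`; the subgraph induced on the lower-half vertices is acyclic and admits a directed
path from `w i` to `w j` only if `i > j`; and the edges between the two halves are
exactly the edges `v i → w i` and `w i → v i` for `1 ≤ i ≤ n`. -/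
theorem aztec_digraph_is_hamburger (n : ℕ) (hn : 1 ≤ n) :
    (∀ i : Fin n, adVertex n (adV n i) ∧ adVertex n (adW n i)) ∧
    (∀ p : List (ℤ × ℤ), ¬ IsCycleList (upperE n) p) ∧
    (∀ i j : Fin n, i ≠ j → (∃ p, IsDirPath (upperE n) (adV n i) (adV n j) p) → i < j) ∧
    (∀ p : List (ℤ × ℤ), ¬ IsCycleList (lowerE n) p) ∧
    (∀ i j : Fin n, i ≠ j → (∃ p, IsDirPath (lowerE n) (adW n i) (adW n j) p) → j < i) ∧
    (∀ p q : ℤ × ℤ, adEdge n p q →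
      ((0 ≤ p.2 ∧ q.2 < 0) ∨ (p.2 < 0 ∧ 0 ≤ q.2)) →
      ∃ i : Fin n, (p = adV n i ∧ q = adW n i) ∨ (p = adW n i ∧ q = adV n i)) := by
  refine ⟨?_, ?_, ?_, ?_, ?_, ?_⟩
  · intro i
    have hi := i.isLt
    constructor
    · rw [show adV n i = ((-(n:ℤ) + 2 * (i:ℕ)), 0) from rfl,
        adVertex_iff n _ _ (Or.inl rfl)]
      omega
    · rw [show adW n i = ((-(n:ℤ) + 2 * (i:ℕ)), -1) from rfl,
        adVertex_iff n _ _ (Or.inr rfl)]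
      omega
  · exact no_cycle Prod.fst (fun x y h => upperE_lt h)
  · rintro i j hij ⟨p, hp⟩
    rcases path_le Prod.fst (fun x y h => upperE_lt h) hp with heq | hlt
    · have := congrArg Prod.fst heq
      simp [adV] at this
      exact absurd (Fin.ext (by omega)) hij
    · simp [adV] at hlt
      exact Fin.lt_def.mpr (by omega)
  · exact no_cycle (fun p => -p.1) (fun x y h => by have := lowerE_lt h; show -x.1 < -y.1; omega)
  · rintro i j hij ⟨p, hp⟩
    rcases path_le (fun p => -p.1) (fun x y h => by have := lowerE_lt h; show -x.1 < -y.1; omega) hp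
      with heq | hlt
    · have := congrArg Prod.fst heq
      simp [adW] at this
      exact absurd (Fin.ext (by omega)) hij
    · simp [adW] at hlt
      exact Fin.lt_def.mpr (by omega)
  · rintro ⟨x, y⟩ q ⟨hp, hq, hc⟩ hmix
    rcases hc with ⟨hy, rfl | rfl | rfl⟩ | ⟨hy, rfl | rfl | rfl⟩ | ⟨hy, rfl⟩ | ⟨hy, rfl⟩ <;>
      simp only at hmix hy ⊢
    · omega
    · omega
    · -- SE edge from row 0: impossible by parity
      exfalso
      have hy0 : y = 0 := by omega
      subst hy0
      norm_num at hp hq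
      rw [adVertex_iff n _ _ (Or.inl rfl)] at hp
      rw [adVertex_iff n _ _ (Or.inr rfl)] at hq
      omega
    · omega
    · omega
    · -- NW edge from row -1: impossible by parity
      exfalso
      have hy0 : y = -1 := by omega
      subst hy0
      norm_num at hp hq
      rw [adVertex_iff n _ _ (Or.inr rfl)] at hp
      rw [adVertex_iff n _ _ (Or.inl rfl)] at hq
      omega
    · -- the genuine crossing edge v i → w i
      subst hy
      rw [adVertex_iff n _ _ (Or.inl rfl)] at hp
      refine ⟨⟨(x + n).toNat / 2, by omega⟩, Or.inl ⟨?_, ?_⟩⟩ <;>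
        simp [adV, adW, Prod.ext_iff] <;> omega
    · -- the genuine crossing edge w i → v i
      subst hy
      rw [adVertex_iff n _ _ (Or.inr rfl)] at hp
      refine ⟨⟨(x + n).toNat / 2, by omega⟩, Or.inr ⟨?_, ?_⟩⟩ <;>
        simp [adV, adW, Prod.ext_iff] <;> omega
end

section
/- For every n ≥ 1 and all 1 ≤ i ≤ j ≤ n, the number of directed paths from v_i to v_j in the upper half of the digraph D_n of the Aztec diamond AD_n equals the large Schröder number s_{j−i}, defined as the number of lattice paths from (0,0) to (j−i, j−i) using steps (1,0), (0,1), and (1,1) that never pass above the line y = x. -/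
/-- A step of a Schröder lattice path: east `(1,0)`, north `(0,1)`, or diagonal
`(1,1)`. -/
def SchroderStep (s : ℤ × ℤ) : Prop := s = (1, 0) ∨ s = (0, 1) ∨ s = (1, 1)

/-- `p` (a list of steps) is a lattice path from `(0,0)` to `(m,m)` using steps `(1,0)`,
`(0,1)` and `(1,1)` that never passes above the line `y = x`. -/
def IsSchroderPath (m : ℕ) (p : List (ℤ × ℤ)) : Prop :=
  (∀ s ∈ p, SchroderStep s) ∧
    (∀ t : ℕ, ((p.take t).sum).2 ≤ ((p.take t).sum).1) ∧
    p.sum = ((m : ℤ), (m : ℤ))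

/-- The `m`-th large Schröder number: the number of lattice paths from `(0,0)` to
`(m,m)` using steps `(1,0)`, `(0,1)` and `(1,1)` that never pass above the line
`y = x`. -/
noncomputable def schroder (m : ℕ) : ℕ :=
  Nat.card {p : List (ℤ × ℤ) // IsSchroderPath m p}

def vstep (v s : ℤ × ℤ) : ℤ × ℤ := (v.1 + s.1 + s.2, v.2 + s.1 - s.2)

def sof (a b : ℤ × ℤ) : ℤ × ℤ :=
  (((b.1 - a.1) + (b.2 - a.2)) / 2, ((b.1 - a.1) - (b.2 - a.2)) / 2)

def toSteps (p : List (ℤ × ℤ)) : List (ℤ × ℤ) := p.zipWith sof p.tail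

lemma toSteps_cons_cons (a b : ℤ × ℤ) (l : List (ℤ × ℤ)) :
    toSteps (a :: b :: l) = sof a b :: toSteps (b :: l) := rfl

lemma sof_vstep (a s : ℤ × ℤ) : sof a (vstep a s) = s := by
  simp only [sof, vstep, Prod.ext_iff]
  constructor <;> ring_nf <;> omega

lemma schroderStep_cases {s : ℤ × ℤ} (h : SchroderStep s) :
    (s.1 = 1 ∧ s.2 = 0) ∨ (s.1 = 0 ∧ s.2 = 1) ∨ (s.1 = 1 ∧ s.2 = 1) := by
  rcases h with h | h | h <;> simp [Prod.ext_iff] at h <;> tauto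

lemma upperE_delta {n : ℕ} {a b : ℤ × ℤ} (h : upperE n a b) :
    (b.1 = a.1 + 2 ∧ b.2 = a.2) ∨ (b.1 = a.1 + 1 ∧ b.2 = a.2 + 1) ∨
      (b.1 = a.1 + 1 ∧ b.2 = a.2 - 1) := by
  obtain ⟨⟨_, _, hc⟩, h1, h2⟩ := h
  rcases hc with ⟨_, h | h | h⟩ | ⟨hneg, _⟩ | ⟨_, h⟩ | ⟨hm, _⟩ <;>
    simp_all [Prod.ext_iff] <;> omega

lemma vstep_sof_upperE {n : ℕ} {a b : ℤ × ℤ} (h : upperE n a b) :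
    vstep a (sof a b) = b := by
  rcases upperE_delta h with ⟨h1, h2⟩ | ⟨h1, h2⟩ | ⟨h1, h2⟩ <;>
    · simp only [vstep, sof, Prod.ext_iff] at *
      constructor <;> omega

lemma schroderStep_sof_upperE {n : ℕ} {a b : ℤ × ℤ} (h : upperE n a b) :
    SchroderStep (sof a b) := by
  rcases upperE_delta h with ⟨h1, h2⟩ | ⟨h1, h2⟩ | ⟨h1, h2⟩
  · right; right
    simp only [sof, Prod.ext_iff]; omega
  · left
    simp only [sof, Prod.ext_iff]; omega
  · right; left
    simp only [sof, Prod.ext_iff]; omega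

/-- reconstruction of a chain from its steps -/
lemma scanl_toSteps {n : ℕ} : ∀ (p : List (ℤ × ℤ)) (a : ℤ × ℤ),
    p.head? = some a → p.Chain' (upperE n) →
    List.scanl vstep a (toSteps p) = p
  | [], a, h, _ => by simp at h
  | [x], a, h, _ => by
      simp at h; subst h; simp [toSteps]
  | x :: y :: p, a, h, hc => by
      simp at h; subst h
      rw [List.Chain', List.isChain_cons_cons] at hc
      have : toSteps (x :: y :: p) = sof x y :: toSteps (y :: p) := rfl
      rw [this, List.scanl_cons, vstep_sof_upperE hc.1]
      simpa using scanl_toSteps (y :: p) y rfl hc.2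

lemma toSteps_scanl : ∀ (q : List (ℤ × ℤ)) (a : ℤ × ℤ),
    toSteps (List.scanl vstep a q) = q
  | [], a => by simp [toSteps]
  | s :: q, a => by
      rw [List.scanl_cons]
      have h2 : List.scanl vstep (vstep a s) q =
          vstep a s :: (List.scanl vstep (vstep a s) q).tail := by
        cases q <;> simp [List.scanl]
      conv_lhs => rw [h2]
      rw [toSteps_cons_cons, ← h2, sof_vstep, toSteps_scanl q (vstep a s)]

lemma mem_toSteps {n : ℕ} : ∀ (p : List (ℤ × ℤ)), p.Chain' (upperE n) →
    ∀ s ∈ toSteps p, SchroderStep s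
  | [], _, s, hs => by simp [toSteps] at hs
  | [x], _, s, hs => by simp [toSteps] at hs
  | x :: y :: p, hc, s, hs => by
      rw [List.Chain', List.isChain_cons_cons] at hc
      have : toSteps (x :: y :: p) = sof x y :: toSteps (y :: p) := rfl
      rw [this] at hs
      rcases List.mem_cons.mp hs with rfl | hs2
      · exact schroderStep_sof_upperE hc.1
      · exact mem_toSteps (y :: p) hc.2 s hs2

lemma getLast_scanl : ∀ (q : List (ℤ × ℤ)) (a : ℤ × ℤ),
    (List.scanl vstep a q).getLast? =
      some (a.1 + q.sum.1 + q.sum.2, a.2 + q.sum.1 - q.sum.2)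
  | [], a => by simp
  | s :: q, a => by
      rw [List.scanl_cons]
      have h2 : List.scanl vstep (vstep a s) q =
          vstep a s :: (List.scanl vstep (vstep a s) q).tail := by
        cases q <;> simp [List.scanl]
      conv_lhs => rw [h2, List.getLast?_cons_cons, ← h2, getLast_scanl q (vstep a s)]
      simp only [vstep, List.sum_cons, Prod.fst_add, Prod.snd_add, Prod.mk.injEq,
        Option.some.injEq]
      constructor <;> ring

lemma take_scanl : ∀ (q : List (ℤ × ℤ)) (a : ℤ × ℤ) (t : ℕ),
    (List.scanl vstep a q).take (t + 1) = List.scanl vstep a (q.take t)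
  | [], a, t => by simp
  | s :: q, a, 0 => by simp [List.scanl]
  | s :: q, a, t + 1 => by
      rw [List.scanl_cons, List.take_succ_cons,
        List.take_succ_cons, List.scanl_cons, take_scanl q (vstep a s) t]

lemma nonneg_along {n : ℕ} : ∀ (p : List (ℤ × ℤ)) (h : ℤ × ℤ),
    p.Chain' (upperE n) → p.head? = some h → 0 ≤ h.2 → ∀ x ∈ p, 0 ≤ x.2
  | [], h, _, hh, _, x, hx => by simp at hx
  | [y], h, _, hh, h0, x, hx => by
      simp at hh hx
      subst hh; subst hx; exact h0
  | y :: z :: p, h, hc, hh, h0, x, hx => by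
      simp at hh; subst hh
      rw [List.Chain', List.isChain_cons_cons] at hc
      rcases List.mem_cons.mp hx with rfl | hx
      · exact h0
      · exact nonneg_along (z :: p) z hc.2 rfl hc.1.2.2 x hx

lemma sum_nonneg_schroder : ∀ (q : List (ℤ × ℤ)),
    (∀ s ∈ q, SchroderStep s) → 0 ≤ q.sum.1 ∧ 0 ≤ q.sum.2
  | [], _ => by simp
  | s :: q, h => by
      have h1 := schroderStep_cases (h s (by simp))
      have h2 := sum_nonneg_schroder q (fun x hx => h x (by simp [hx]))
      simp only [List.sum_cons, Prod.fst_add, Prod.snd_add]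
      omega

lemma mk_vertex {n : ℕ} (a : ℤ × ℤ) (hy : 0 ≤ a.2) (h1 : -(n : ℤ) ≤ a.1 - a.2)
    (h2 : a.1 + a.2 ≤ (n : ℤ) - 2) (h3 : Even (a.1 + a.2 + n)) : adVertex n a := by
  obtain ⟨x, y⟩ := a
  simp only at hy h1 h2 h3
  have hax : |x| ≤ (n : ℤ) - y := abs_le.mpr ⟨by omega, by omega⟩
  have hax1 : |x + 1| ≤ (n : ℤ) - y := abs_le.mpr ⟨by omega, by omega⟩
  have hax2 : |x + 1 + 1| ≤ (n : ℤ) - y := abs_le.mpr ⟨by omega, by omega⟩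
  have hay : |y| = y := abs_of_nonneg hy
  have hay1 : |y + 1| = y + 1 := abs_of_nonneg (by omega)
  refine ⟨⟨?_, ?_, ?_, ?_⟩, ⟨?_, ?_, ?_, ?_⟩, ?_⟩ <;>
    simp only [ADset, Set.mem_setOf_eq, hay, hay1]
  · omega
  · omega
  · omega
  · omega
  · omega
  · omega
  · omega
  · omega
  · rw [max_eq_right (by omega : (y : ℤ) ≤ y + 1)]
    obtain ⟨k, hk⟩ := h3
    exact ⟨k + 1, by omega⟩

lemma chain_scanl (n : ℕ) : ∀ (q : List (ℤ × ℤ)) (a : ℤ × ℤ),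
    (∀ s ∈ q, SchroderStep s) →
    (∀ t : ℕ, 0 ≤ a.2 + (((q.take t).sum).1 - ((q.take t).sum).2)) →
    -(n : ℤ) ≤ a.1 - a.2 →
    a.1 + a.2 + 2 * q.sum.1 ≤ (n : ℤ) - 2 →
    Even (a.1 + a.2 + (n : ℤ)) →
    List.Chain' (upperE n) (List.scanl vstep a q)
  | [], a, _, _, _, _, _ => by exact List.isChain_singleton a
  | s :: q, a, hS, hpre, hlow, hup, hev => by
      have ha2 : 0 ≤ a.2 := by have := hpre 0; simpa using this
      have hs := schroderStep_cases (hS s (by simp))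
      have hqsum := sum_nonneg_schroder q (fun x hx => hS x (by simp [hx]))
      have hsum : (s :: q : List (ℤ × ℤ)).sum.1 = s.1 + q.sum.1 := by
        simp [Prod.fst_add]
      have hb2 : 0 ≤ (vstep a s).2 := by
        have := hpre 1
        simp only [List.take_succ_cons, List.take_zero, List.sum_cons, List.sum_nil,
          add_zero, Prod.fst_add, Prod.snd_add, Prod.fst_zero, Prod.snd_zero] at this
        simp only [vstep]; omega
      have hva : adVertex n a := by
        refine mk_vertex a ha2 hlow (by omega) hev
      have hvb : adVertex n (vstep a s) := by
        refine mk_vertex _ hb2 ?_ ?_ ?_ <;> simp only [vstep]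
        · omega
        · omega
        · obtain ⟨k, hk⟩ := hev; exact ⟨k + s.1, by omega⟩
      have hedge : upperE n a (vstep a s) := by
        refine ⟨⟨hva, hvb, Or.inl ⟨ha2, ?_⟩⟩, ha2, hb2⟩
        rcases hs with ⟨e1, e2⟩ | ⟨e1, e2⟩ | ⟨e1, e2⟩
        · right; left; simp only [vstep, Prod.mk.injEq]; omega
        · right; right; simp only [vstep, Prod.mk.injEq]; omega
        · left; simp only [vstep, Prod.mk.injEq]; omega
      have hrest : List.Chain' (upperE n) (List.scanl vstep (vstep a s) q) := by
        refine chain_scanl n q (vstep a s) (fun x hx => hS x (by simp [hx])) ?_ ?_ ?_ ?_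
        · intro t
          have := hpre (t + 1)
          simp only [List.take_succ_cons, List.sum_cons, Prod.fst_add, Prod.snd_add]
            at this
          simp only [vstep]; omega
        · simp only [vstep]; omega
        · simp only [vstep]; omega
        · simp only [vstep]
          obtain ⟨k, hk⟩ := hev; exact ⟨k + s.1, by omega⟩
      have h2 : List.scanl vstep (vstep a s) q =
          vstep a s :: (List.scanl vstep (vstep a s) q).tail := by
        cases q <;> simp [List.scanl]
      rw [List.scanl_cons]
      rw [h2] at hrest ⊢
      exact List.isChain_cons_cons.mpr ⟨hedge, hrest⟩

lemma mono_scanl : ∀ (q : List (ℤ × ℤ)) (a : ℤ × ℤ),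
    (∀ s ∈ q, SchroderStep s) →
    List.Chain' (fun u v : ℤ × ℤ => u.1 < v.1) (List.scanl vstep a q)
  | [], a, _ => by exact List.isChain_singleton a
  | s :: q, a, hS => by
      have hs := schroderStep_cases (hS s (by simp))
      have hrest := mono_scanl q (vstep a s) (fun x hx => hS x (by simp [hx]))
      have h2 : List.scanl vstep (vstep a s) q =
          vstep a s :: (List.scanl vstep (vstep a s) q).tail := by
        cases q <;> simp [List.scanl]
      rw [List.scanl_cons]
      rw [h2] at hrest ⊢
      refine List.isChain_cons_cons.mpr ⟨?_, hrest⟩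
      simp only [vstep]; omega

lemma mem_of_getLast?_eq {l : List (ℤ × ℤ)} {c : ℤ × ℤ} (h : l.getLast? = some c) :
    c ∈ l := by
  obtain ⟨hne, hc⟩ := List.mem_getLast?_eq_getLast (Option.mem_def.mpr h)
  exact hc ▸ List.getLast_mem hne

lemma nodup_of_chain'_lt (p : List (ℤ × ℤ))
    (h : List.Chain' (fun u v : ℤ × ℤ => u.1 < v.1) p) : p.Nodup := by
  haveI : IsTrans (ℤ × ℤ) (fun u v : ℤ × ℤ => u.1 < v.1) :=
    ⟨fun a b c h1 h2 => lt_trans h1 h2⟩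
  have hp := List.isChain_iff_pairwise.mp h
  exact hp.imp fun {a b} hab => by rintro rfl; exact lt_irrefl _ hab

lemma schroder_to_dirpath (n : ℕ) (i j : Fin n) (hij : (i : ℕ) ≤ (j : ℕ))
    (q : List (ℤ × ℤ)) (hq : IsSchroderPath ((j : ℕ) - (i : ℕ)) q) :
    IsDirPath (upperE n) (adV n i) (adV n j) (List.scanl vstep (adV n i) q) := by
  obtain ⟨hS, hpre, hsum⟩ := hq
  have hjn : (j : ℕ) < n := j.isLt
  have hmz : ((((j : ℕ) - (i : ℕ) : ℕ)) : ℤ) = ((j : ℕ) : ℤ) - ((i : ℕ) : ℤ) := by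
    omega
  have hsum1 : q.sum.1 = ((j : ℕ) : ℤ) - ((i : ℕ) : ℤ) := by
    rw [hsum]; exact hmz
  have hsum2 : q.sum.2 = ((j : ℕ) : ℤ) - ((i : ℕ) : ℤ) := by
    rw [hsum]; exact hmz
  refine ⟨?_, ?_, ?_, ?_⟩
  · refine chain_scanl n q (adV n i) hS ?_ ?_ ?_ ?_
    · intro t
      have := hpre t
      simp only [adV]
      omega
    · simp only [adV]
      omega
    · simp only [adV]
      omega
    · simp only [adV]
      exact ⟨(i : ℕ), by push_cast; ring⟩
  · cases q <;> simp [List.scanl]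
  · rw [getLast_scanl q (adV n i)]
    simp only [adV, Option.some.injEq, Prod.mk.injEq]
    omega
  · exact nodup_of_chain'_lt _ (mono_scanl q (adV n i) hS)

lemma dirpath_to_schroder (n : ℕ) (i j : Fin n) (hij : (i : ℕ) ≤ (j : ℕ))
    (p : List (ℤ × ℤ)) (hp : IsDirPath (upperE n) (adV n i) (adV n j) p) :
    IsSchroderPath ((j : ℕ) - (i : ℕ)) (toSteps p) := by
  obtain ⟨hchain, hhead, hlast, _⟩ := hp
  have hrec := scanl_toSteps p (adV n i) hhead hchain
  set q := toSteps p with hq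
  have hL := getLast_scanl q (adV n i)
  rw [hrec, hlast] at hL
  simp only [adV, Option.some.injEq, Prod.mk.injEq] at hL
  have hmz : ((((j : ℕ) - (i : ℕ) : ℕ)) : ℤ) = ((j : ℕ) : ℤ) - ((i : ℕ) : ℤ) := by
    omega
  refine ⟨mem_toSteps p hchain, ?_, ?_⟩
  · intro t
    have hTk := take_scanl q (adV n i) t
    rw [hrec] at hTk
    have hGl := getLast_scanl (q.take t) (adV n i)
    rw [← hTk] at hGl
    have hmem : ((adV n i).1 + (q.take t).sum.1 + (q.take t).sum.2,
        (adV n i).2 + (q.take t).sum.1 - (q.take t).sum.2) ∈ p :=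
      List.mem_of_mem_take (mem_of_getLast?_eq hGl)
    have h0 := nonneg_along p (adV n i) hchain hhead (by simp [adV]) _ hmem
    simp only [adV] at h0
    omega
  · have : q.sum = (q.sum.1, q.sum.2) := rfl
    rw [this, hmz, Prod.mk.injEq]
    omega

/-- For all `1 ≤ i ≤ j ≤ n`, the number of directed paths from `v i` to `v j` in the
upper half of the digraph `D n` of the Aztec diamond `AD n` equals the large Schröder
number `s (j - i)`. -/
theorem aztec_paths_eq_schroder (n : ℕ) (hn : 1 ≤ n) (i j : Fin n) (hij : i ≤ j) :
    numPaths (upperE n) (adV n i) (adV n j) = schroder ((j : ℕ) - (i : ℕ)) := by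
  have hij' : (i : ℕ) ≤ (j : ℕ) := hij
  unfold numPaths schroder
  exact Nat.card_congr
    { toFun := fun p => ⟨toSteps p.1, dirpath_to_schroder n i j hij' p.1 p.2⟩
      invFun := fun s => ⟨List.scanl vstep (adV n i) s.1,
        schroder_to_dirpath n i j hij' s.1 s.2⟩
      left_inv := fun p => Subtype.ext (scanl_toSteps p.1 (adV n i) p.2.2.1 p.2.1)
      right_inv := fun s => Subtype.ext (toSteps_scanl s.1 (adV n i)) }
end
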